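/- arXiv:2001.04067 — 9 statements merged into one kernel-verified Lean document; each statement's English description precedes it below -/
import Mathlib

section
/- Let f : ℝ → ℝ be convex and antitone (decreasing), and let A = (a_1,…,a_n), B = (b_1,…,b_n) be two finite sequences of reals such that A weakly majorizes B from below, i.e., for every k = 1,…,n the sum of the k smallest entries of A is at least the sum of the k smallest entries of B. Then f(a_1)+⋯+f(a_n) ≤ f(b_1)+⋯+f(b_n). -/
/-- The sum of the `k` smallest elements of a multiset of reals. -/
noncomputable def kSmallestSum (M : Multiset ℝ) (k : ℕ) : ℝ := ((M.sort (· ≤ ·)).take k).sum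

/-- `A` weakly majorizes `B` (from below): for every `k`, the sum of the `k`
smallest entries of `A` is at least that of `B`. -/
def WeakMaj (A B : Multiset ℝ) : Prop := ∀ k : ℕ, kSmallestSum B k ≤ kSmallestSum A k

/-- The multiset of values of a finite sequence. -/
def seqMultiset {n : ℕ} (a : Fin n → ℝ) : Multiset ℝ := Finset.univ.val.map a

namespace WKAux

noncomputable def sl (f : ℝ → ℝ) (p q : ℝ) : ℝ := (f q - f p) / (q - p)

lemma sl_comm (f : ℝ → ℝ) (p q : ℝ) : sl f p q = sl f q p := by
  unfold sl
  rw [← neg_div_neg_eq]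
  ring_nf

lemma sl_pair_mono {f : ℝ → ℝ} (hconv : ConvexOn ℝ Set.univ f) {p q p' q' : ℝ}
    (h1 : p < q) (h2 : p' < q') (hp : p ≤ p') (hq : q ≤ q') :
    sl f p q ≤ sl f p' q' := by
  have step1 : sl f p q ≤ sl f p q' :=
    hconv.secant_mono (Set.mem_univ p) (Set.mem_univ q) (Set.mem_univ q')
      (ne_of_gt h1) (ne_of_gt (lt_of_lt_of_le h1 hq)) hq
  have step2 : sl f q' p ≤ sl f q' p' :=
    hconv.secant_mono (Set.mem_univ q') (Set.mem_univ p) (Set.mem_univ p')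
      (ne_of_lt (lt_of_lt_of_le h1 hq)) (ne_of_lt h2) hp
  calc sl f p q ≤ sl f p q' := step1
    _ = sl f q' p := sl_comm f p q'
    _ ≤ sl f q' p' := step2
    _ = sl f p' q' := sl_comm f q' p'

lemma sl_nonpos {f : ℝ → ℝ} (hanti : Antitone f) {p q : ℝ} (h : p < q) :
    sl f p q ≤ 0 := by
  unfold sl
  apply div_nonpos_of_nonpos_of_nonneg
  · linarith [hanti h.le]
  · linarith

/-- Generalized slope: the slope between `min` and `max`; at ties, the left derivative. -/
noncomputable def gsl (f : ℝ → ℝ) (p q : ℝ) : ℝ :=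
  if p = q then sSup ((fun y => sl f y p) '' Set.Iio p) else sl f (min p q) (max p q)

lemma lderiv_set_nonempty (f : ℝ → ℝ) (x : ℝ) :
    ((fun y => sl f y x) '' Set.Iio x).Nonempty :=
  ⟨sl f (x - 1) x, ⟨x - 1, by norm_num, rfl⟩⟩

lemma lderiv_set_bdd {f : ℝ → ℝ} (hconv : ConvexOn ℝ Set.univ f) (x : ℝ) :
    BddAbove ((fun y => sl f y x) '' Set.Iio x) := by
  refine ⟨sl f x (x + 1), ?_⟩
  rintro _ ⟨y, hy, rfl⟩
  exact sl_pair_mono hconv hy (by norm_num) (le_of_lt hy) (by norm_num)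

/-- Any chord slope lying (weakly) left of `x` is at most the left derivative at `x`. -/
lemma sl_le_lderiv {f : ℝ → ℝ} (hconv : ConvexOn ℝ Set.univ f) {u v x : ℝ}
    (huv : u < v) (hvx : v ≤ x) :
    sl f u v ≤ sSup ((fun y => sl f y x) '' Set.Iio x) := by
  have hux : u < x := lt_of_lt_of_le huv hvx
  have hmem : sl f u x ∈ (fun y => sl f y x) '' Set.Iio x := ⟨u, hux, rfl⟩
  have h1 : sl f u v ≤ sl f u x := sl_pair_mono hconv huv hux le_rfl hvx
  exact h1.trans (le_csSup (lderiv_set_bdd hconv x) hmem)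

/-- The left derivative at `x` is at most any chord slope lying (weakly) right of `x`. -/
lemma lderiv_le_sl {f : ℝ → ℝ} (hconv : ConvexOn ℝ Set.univ f) {u v x : ℝ}
    (huv : u < v) (hxu : x ≤ u) :
    sSup ((fun y => sl f y x) '' Set.Iio x) ≤ sl f u v := by
  apply csSup_le (lderiv_set_nonempty f x)
  rintro _ ⟨y, hy, rfl⟩
  exact sl_pair_mono hconv hy huv (hy.le.trans hxu) ((lt_of_le_of_lt hxu huv).le)

lemma lderiv_nonpos {f : ℝ → ℝ} (hanti : Antitone f) (x : ℝ) :
    sSup ((fun y => sl f y x) '' Set.Iio x) ≤ 0 := by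
  apply Real.sSup_le _ le_rfl
  rintro _ ⟨y, hy, rfl⟩
  exact sl_nonpos hanti hy

lemma lderiv_mono {f : ℝ → ℝ} (hconv : ConvexOn ℝ Set.univ f) {x x' : ℝ} (h : x ≤ x') :
    sSup ((fun y => sl f y x) '' Set.Iio x) ≤ sSup ((fun y => sl f y x') '' Set.Iio x') := by
  rcases eq_or_lt_of_le h with rfl | h
  · exact le_rfl
  apply csSup_le (lderiv_set_nonempty f x)
  rintro _ ⟨y, hy, rfl⟩
  have h1 : sl f y x ≤ sl f y x' := sl_pair_mono hconv hy (hy.trans h) le_rfl h.le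
  exact h1.trans (le_csSup (lderiv_set_bdd hconv x') ⟨y, hy.trans h, rfl⟩)

lemma gsl_nonpos {f : ℝ → ℝ} (hanti : Antitone f) (p q : ℝ) :
    gsl f p q ≤ 0 := by
  unfold gsl
  split
  · exact lderiv_nonpos hanti p
  · next h => exact sl_nonpos hanti (min_lt_max.mpr h)

lemma gsl_mono {f : ℝ → ℝ} (hconv : ConvexOn ℝ Set.univ f) {p q p' q' : ℝ}
    (hp : p ≤ p') (hq : q ≤ q') : gsl f p q ≤ gsl f p' q' := by
  unfold gsl
  split <;> split
  · next h h' =>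
    subst h; subst h'
    exact lderiv_mono hconv hp
  · next h h' =>
    subst h
    exact lderiv_le_sl hconv (min_lt_max.mpr h') (le_min hp hq)
  · next h h' =>
    subst h'
    exact sl_le_lderiv hconv (min_lt_max.mpr h) (max_le hp hq)
  · next h h' =>
    exact sl_pair_mono hconv (min_lt_max.mpr h) (min_lt_max.mpr h')
      (min_le_min hp hq) (max_le_max hp hq)

lemma gsl_eq {f : ℝ → ℝ} {p q : ℝ} (h : p ≠ q) : gsl f p q = sl f p q := by
  unfold gsl
  rw [if_neg h]
  rcases le_total p q with hle | hle
  · rw [min_eq_left hle, max_eq_right hle]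
  · rw [min_eq_right hle, max_eq_left hle, sl_comm]

/-- Abel-summation style bound. -/
lemma abel_bound (σ x : ℕ → ℝ) (hσ : Monotone σ)
    (hx : ∀ k, 0 ≤ ∑ i ∈ Finset.range k, x i) :
    ∀ n, ∑ i ∈ Finset.range n, σ i * x i ≤ σ n * ∑ i ∈ Finset.range n, x i := by
  intro n
  induction n with
  | zero => simp
  | succ n ih =>
    rw [Finset.sum_range_succ, Finset.sum_range_succ]
    have h1 : σ n * (∑ i ∈ Finset.range n, x i) + σ n * x n
        = σ n * (∑ i ∈ Finset.range n, x i + x n) := by ring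
    have h2 : σ n * (∑ i ∈ Finset.range n, x i + x n)
        ≤ σ (n + 1) * (∑ i ∈ Finset.range n, x i + x n) := by
      apply mul_le_mul_of_nonneg_right (hσ (Nat.le_succ n))
      have := hx (n + 1)
      rwa [Finset.sum_range_succ] at this
    linarith [add_le_add_right ih (σ n * x n)]

lemma sum_take_getD (l : List ℝ) (k : ℕ) :
    (l.take k).sum = ∑ i ∈ Finset.range k, l.getD i 0 := by
  induction k with
  | zero => simp
  | succ k ih =>
    rw [Finset.sum_range_succ, ← ih, List.take_succ, List.sum_append]
    congr 1
    rcases lt_or_ge k l.length with h | h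
    · rw [List.getElem?_eq_getElem h, List.getD_eq_getElem l 0 h]
      simp
    · rw [List.getElem?_eq_none h, List.getD_eq_default l 0 h]
      simp

lemma sum_map_getD (f : ℝ → ℝ) (l : List ℝ) :
    (l.map f).sum = ∑ i ∈ Finset.range l.length, f (l.getD i 0) := by
  have h1 : (l.map f).sum = ((l.map f).take (l.map f).length).sum := by
    rw [List.take_length]
  rw [h1, sum_take_getD, List.length_map]
  apply Finset.sum_congr rfl
  intro i hi
  rw [Finset.mem_range] at hi
  rw [List.getD_eq_getElem _ 0 (by simpa using hi), List.getElem_map,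
    List.getD_eq_getElem l 0 hi]

lemma getD_mono {l : List ℝ} (hl : l.Pairwise (· ≤ ·)) {i j : ℕ} (hij : i ≤ j)
    (hj : j < l.length) : l.getD i 0 ≤ l.getD j 0 := by
  rw [List.getD_eq_getElem l 0 (lt_of_le_of_lt hij hj), List.getD_eq_getElem l 0 hj]
  rcases eq_or_lt_of_le hij with rfl | h
  · exact le_rfl
  · exact List.pairwise_iff_getElem.mp hl i j _ hj h

end WKAux

open WKAux in
/-- Weak Karamata (majorization) inequality for convex decreasing functions. -/
theorem weak_karamata {n : ℕ} (f : ℝ → ℝ) (hconv : ConvexOn ℝ Set.univ f)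
    (hanti : Antitone f) (A B : Fin n → ℝ)
    (hmaj : WeakMaj (seqMultiset A) (seqMultiset B)) :
    ∑ i, f (A i) ≤ ∑ i, f (B i) := by
  classical
  set la : List ℝ := (seqMultiset A).sort (· ≤ ·) with hla
  set lb : List ℝ := (seqMultiset B).sort (· ≤ ·) with hlb
  have hlen_a : la.length = n := by
    rw [hla, Multiset.length_sort]
    simp [seqMultiset]
  have hlen_b : lb.length = n := by
    rw [hlb, Multiset.length_sort]
    simp [seqMultiset]
  have hsa : la.Pairwise (· ≤ ·) := Multiset.pairwise_sort _ _
  have hsb : lb.Pairwise (· ≤ ·) := Multiset.pairwise_sort _ _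
  set a : ℕ → ℝ := fun i => la.getD i 0 with ha
  set b : ℕ → ℝ := fun i => lb.getD i 0 with hb
  set x : ℕ → ℝ := fun i => a i - b i with hxdef
  set σ : ℕ → ℝ := fun i => if i < n then gsl f (b i) (a i) else 0 with hσdef
  -- sum rewriting
  have sumA : ∑ i, f (A i) = ∑ i ∈ Finset.range n, f (a i) := by
    have h1 : ∑ i, f (A i) = ((seqMultiset A).map f).sum := by
      rw [seqMultiset, Multiset.map_map]
      rfl
    have h2 : (seqMultiset A) = (la : Multiset ℝ) := (Multiset.sort_eq _ _).symm
    rw [h1, h2, Multiset.map_coe, Multiset.sum_coe, sum_map_getD, hlen_a]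
  have sumB : ∑ i, f (B i) = ∑ i ∈ Finset.range n, f (b i) := by
    have h1 : ∑ i, f (B i) = ((seqMultiset B).map f).sum := by
      rw [seqMultiset, Multiset.map_map]
      rfl
    have h2 : (seqMultiset B) = (lb : Multiset ℝ) := (Multiset.sort_eq _ _).symm
    rw [h1, h2, Multiset.map_coe, Multiset.sum_coe, sum_map_getD, hlen_b]
  -- prefix sums nonneg
  have hx : ∀ k, 0 ≤ ∑ i ∈ Finset.range k, x i := by
    intro k
    have : ∑ i ∈ Finset.range k, x i
        = (∑ i ∈ Finset.range k, a i) - (∑ i ∈ Finset.range k, b i) := by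
      rw [Finset.sum_sub_distrib]
    rw [this, ← sum_take_getD la k, ← sum_take_getD lb k]
    have := hmaj k
    unfold kSmallestSum at this
    rw [← hla, ← hlb] at this
    linarith
  -- σ monotone
  have hσmono : Monotone σ := by
    intro i j hij
    simp only [hσdef]
    by_cases hi : i < n
    · by_cases hj : j < n
      · rw [if_pos hi, if_pos hj]
        exact gsl_mono hconv (getD_mono hsb hij (hlen_b ▸ hj))
          (getD_mono hsa hij (hlen_a ▸ hj))
      · rw [if_pos hi, if_neg hj]
        exact gsl_nonpos hanti _ _
    · have hj : ¬ j < n := fun hc => hi (lt_of_le_of_lt hij hc)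
      rw [if_neg hi, if_neg hj]
  -- pointwise identity
  have hpt : ∀ i ∈ Finset.range n, f (a i) - f (b i) = σ i * x i := by
    intro i hi
    rw [Finset.mem_range] at hi
    simp only [hσdef, hxdef, if_pos hi]
    by_cases h : b i = a i
    · rw [h]; ring
    · rw [gsl_eq h, sl, div_mul_cancel₀ _ (sub_ne_zero.mpr (Ne.symm h))]
  -- conclude
  have key : ∑ i ∈ Finset.range n, σ i * x i ≤ 0 := by
    have := abel_bound σ x hσmono hx n
    have hσn : σ n = 0 := by simp [hσdef]
    rw [hσn, zero_mul] at this
    exact this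
  have : ∑ i ∈ Finset.range n, (f (a i) - f (b i)) ≤ 0 := by
    rw [Finset.sum_congr rfl hpt]
    exact key
  rw [Finset.sum_sub_distrib] at this
  rw [sumA, sumB]
  linarith
end

section
/- If for every convex decreasing function g : ℝ → ℝ one has g(a_1)+⋯+g(a_n) ≤ g(b_1)+⋯+g(b_n), then the sequence A = (a_1,…,a_n) weakly majorizes B = (b_1,…,b_n), i.e., for every k the sum of the k smallest entries of A is at least the sum of the k smallest entries of B. -/
/-- The multiset of pairwise `ρ`-values of an `m`-point configuration. -/
def pairMultiset {S : Type*} {m : ℕ} (ρ : S → S → ℝ) (X : Fin m → S) : Multiset ℝ :=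
  ((Finset.univ.filter (fun q : Fin m × Fin m => q.1 < q.2)).val).map
    (fun q => ρ (X q.1) (X q.2))

lemma mapSubSum (l : List ℝ) (t : ℝ) : (l.map (fun x => t - x)).sum = l.length * t - l.sum := by
  induction l with
  | nil => simp
  | cons a l ih => simp [ih]; ring

lemma lowerBound (l : List ℝ) (k : ℕ) (t : ℝ) (hk : k ≤ l.length) :
    (k : ℝ) * t - (l.take k).sum ≤ (l.map (fun x => max (t - x) 0)).sum := by
  have hsplit := List.take_append_drop k l
  calc (k : ℝ) * t - (l.take k).sum
      = ((l.take k).map (fun x => t - x)).sum := by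
        rw [mapSubSum]
        simp [List.length_take, Nat.min_eq_left hk]
    _ ≤ ((l.take k).map (fun x => max (t - x) 0)).sum :=
        List.sum_le_sum (fun x _ => le_max_left _ _)
    _ ≤ ((l.take k).map (fun x => max (t - x) 0)).sum
        + ((l.drop k).map (fun x => max (t - x) 0)).sum := by
        have : (0:ℝ) ≤ ((l.drop k).map (fun x => max (t - x) 0)).sum :=
          List.sum_nonneg (by
            intro x hx
            obtain ⟨y, _, rfl⟩ := List.mem_map.mp hx
            exact le_max_right _ _)
        linarith
    _ = (l.map (fun x => max (t - x) 0)).sum := by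
        rw [← List.sum_append, ← List.map_append, hsplit]

lemma upperEq (l : List ℝ) (k : ℕ) (t : ℝ) (hk : k ≤ l.length)
    (h1 : ∀ x ∈ l.take k, x ≤ t) (h2 : ∀ x ∈ l.drop k, t ≤ x) :
    (l.map (fun x => max (t - x) 0)).sum = (k : ℝ) * t - (l.take k).sum := by
  have hsplit := List.take_append_drop k l
  have e1 : ((l.take k).map (fun x => max (t - x) 0)).sum
      = ((l.take k).map (fun x => t - x)).sum := by
    congr 1
    exact List.map_congr_left (fun x hx => max_eq_left (by linarith [h1 x hx]))
  have e2 : ((l.drop k).map (fun x => max (t - x) 0)).sum = 0 := by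
    have : (l.drop k).map (fun x => max (t - x) 0) = (l.drop k).map (fun _ => (0:ℝ)) :=
      List.map_congr_left (fun x hx => max_eq_right (by linarith [h2 x hx]))
    simp [this]
  calc (l.map (fun x => max (t - x) 0)).sum
      = ((l.take k).map (fun x => max (t - x) 0)).sum
        + ((l.drop k).map (fun x => max (t - x) 0)).sum := by
        rw [← List.sum_append, ← List.map_append, hsplit]
    _ = (k : ℝ) * t - (l.take k).sum := by
        rw [e1, e2, mapSubSum]
        simp [List.length_take, Nat.min_eq_left hk]

lemma convexMax (t : ℝ) : ConvexOn ℝ Set.univ (fun x => max (t - x) 0) := by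
  refine ⟨convex_univ, fun x _ y _ a b ha hb hab => ?_⟩
  simp only [smul_eq_mul]
  apply max_le
  · have e : t - (a * x + b * y) = a * (t - x) + b * (t - y) := by
      have : a + b = 1 := hab
      linear_combination (-t) * this
    rw [e]
    gcongr
    · exact le_max_left _ _
    · exact le_max_left _ _
  · have := mul_nonneg ha (le_max_right (t - x) 0)
    have := mul_nonneg hb (le_max_right (t - y) 0)
    linarith

lemma antitoneMax (t : ℝ) : Antitone (fun x => max (t - x) 0) :=
  fun x y hxy => max_le_max (by linarith) le_rfl

lemma sumEq {n : ℕ} (A : Fin n → ℝ) (g : ℝ → ℝ) :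
    ∑ i, g (A i) = (((seqMultiset A).sort (· ≤ ·)).map g).sum := by
  have h1 : ∑ i, g (A i) = ((seqMultiset A).map g).sum := by
    simp [seqMultiset, Finset.sum, Multiset.map_map]; rfl
  have h2 : ((seqMultiset A).map g).sum
      = (((seqMultiset A).sort (· ≤ ·)).map g).sum := by
    conv_lhs => rw [← Multiset.sort_eq (seqMultiset A) (· ≤ ·)]
    simp only [Multiset.map_coe, Multiset.sum_coe]
  rw [h1]; exact h2

lemma lenSort {n : ℕ} (A : Fin n → ℝ) : ((seqMultiset A).sort (· ≤ ·)).length = n := by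
  rw [Multiset.length_sort]
  simp [seqMultiset]

/-- Converse of the weak Karamata inequality: if the energy inequality holds for all
convex decreasing functions, then weak majorization holds. -/
theorem weak_karamata_converse {n : ℕ} (A B : Fin n → ℝ)
    (h : ∀ g : ℝ → ℝ, ConvexOn ℝ Set.univ g → Antitone g →
      ∑ i, g (A i) ≤ ∑ i, g (B i)) :
    WeakMaj (seqMultiset A) (seqMultiset B) := by
  set lA := (seqMultiset A).sort (· ≤ ·) with hlA
  set lB := (seqMultiset B).sort (· ≤ ·) with hlB
  have lenA : lA.length = n := lenSort A
  have lenB : lB.length = n := lenSort B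
  have key : ∀ k : ℕ, k ≤ n → kSmallestSum (seqMultiset B) k ≤ kSmallestSum (seqMultiset A) k := by
    intro k hk
    rcases Nat.eq_zero_or_pos k with rfl | hkpos
    · simp [kSmallestSum]
    have hk1 : k - 1 < lB.length := by omega
    set t := lB.get ⟨k - 1, hk1⟩ with ht
    have hsorted : lB.Pairwise (· ≤ ·) := Multiset.pairwise_sort _ _
    have h1 : ∀ x ∈ lB.take k, x ≤ t := by
      intro x hx
      obtain ⟨i, hi, rfl⟩ := List.mem_iff_getElem.mp hx
      rw [List.getElem_take]
      have hik : i < k := by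
        have := hi; rw [List.length_take] at this; omega
      have hi' : i < lB.length := by omega
      exact hsorted.rel_get_of_le (a := ⟨i, hi'⟩) (b := ⟨k - 1, hk1⟩) (by
        rw [Fin.mk_le_mk]; omega)
    have h2 : ∀ x ∈ lB.drop k, t ≤ x := by
      intro x hx
      obtain ⟨i, hi, rfl⟩ := List.mem_iff_getElem.mp hx
      rw [List.getElem_drop]
      have hi' : k + i < lB.length := by
        have := hi; rw [List.length_drop] at this; omega
      exact hsorted.rel_get_of_le (a := ⟨k - 1, hk1⟩) (b := ⟨k + i, hi'⟩) (by
        rw [Fin.mk_le_mk]; omega)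
    have hg := h (fun x => max (t - x) 0) (convexMax t) (antitoneMax t)
    rw [sumEq A (fun x => max (t - x) 0), sumEq B (fun x => max (t - x) 0), ← hlA, ← hlB] at hg
    have hBeq : (lB.map (fun x => max (t - x) 0)).sum = (k : ℝ) * t - (lB.take k).sum :=
      upperEq lB k t (by omega) h1 h2
    have hAlow : (k : ℝ) * t - (lA.take k).sum ≤ (lA.map (fun x => max (t - x) 0)).sum :=
      lowerBound lA k t (by omega)
    show (lB.take k).sum ≤ (lA.take k).sum
    linarith [hg, hBeq, hAlow]
  intro k
  have hA : kSmallestSum (seqMultiset A) k = kSmallestSum (seqMultiset A) (min k n) := by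
    unfold kSmallestSum
    rw [← hlA]
    congr 1
    rw [List.take_eq_take_iff]
    omega
  have hB : kSmallestSum (seqMultiset B) k = kSmallestSum (seqMultiset B) (min k n) := by
    unfold kSmallestSum
    rw [← hlB]
    congr 1
    rw [List.take_eq_take_iff]
    omega
  rw [hA, hB]
  exact key (min k n) (Nat.min_le_right _ _)
end

section
/- Let f be a strictly convex decreasing function on ℝ, and let A, B be sequences of n reals with A weakly majorizing B. If f(a_1)+⋯+f(a_n) = f(b_1)+⋯+f(b_n), then the nondecreasing rearrangements of A and B coincide. -/
open Finset

private lemma wk_slope_comm (f : ℝ → ℝ) (a b : ℝ) :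
    (f b - f a) / (b - a) = (f a - f b) / (a - b) := by
  rw [← neg_div_neg_eq]; ring_nf

private lemma wk_strictAnti {f : ℝ → ℝ} (hconv : StrictConvexOn ℝ Set.univ f)
    (hanti : Antitone f) : StrictAnti f := by
  intro a b hab
  rcases lt_or_eq_of_le (hanti hab.le) with h | h
  · exact h
  · exfalso
    have hmid := hconv.2 (Set.mem_univ a) (Set.mem_univ b) hab.ne
      (by norm_num : (0:ℝ) < 1/2) (by norm_num : (0:ℝ) < 1/2) (by norm_num)
    have h1 : (1/2 : ℝ) • a + (1/2 : ℝ) • b ≤ b := by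
      simp only [smul_eq_mul]; linarith
    have h2 := hanti h1
    rw [h] at hmid
    simp only [smul_eq_mul] at hmid h2
    linarith

private lemma wk_slope_neg {f : ℝ → ℝ} (hsa : StrictAnti f) {u v : ℝ} (huv : u < v) :
    (f v - f u) / (v - u) < 0 :=
  div_neg_of_neg_of_pos (by linarith [hsa huv]) (by linarith)

private lemma wk_slope_mono {f : ℝ → ℝ} (hconv : ConvexOn ℝ Set.univ f)
    {u v u' v' : ℝ} (hu : u ≤ u') (hv : v ≤ v') (h1 : u < v) (h2 : u' < v') :
    (f v - f u) / (v - u) ≤ (f v' - f u') / (v' - u') := by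
  have huv' : u < v' := lt_of_lt_of_le h1 hv
  have step1 : (f v - f u) / (v - u) ≤ (f v' - f u) / (v' - u) :=
    hconv.secant_mono (Set.mem_univ u) (Set.mem_univ v) (Set.mem_univ v')
      (ne_of_gt h1) (ne_of_gt huv') hv
  have step2 : (f u - f v') / (u - v') ≤ (f u' - f v') / (u' - v') :=
    hconv.secant_mono (Set.mem_univ v') (Set.mem_univ u) (Set.mem_univ u')
      (ne_of_lt huv') (ne_of_lt h2) hu
  rw [← wk_slope_comm f u v', ← wk_slope_comm f u' v'] at step2
  exact le_trans step1 step2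

private lemma wk_slope_strict {f : ℝ → ℝ} (hconv : StrictConvexOn ℝ Set.univ f)
    {u v u' v' : ℝ} (hu : u < u') (hv : v ≤ v') (h1 : u < v) (h2 : u' < v') :
    (f v - f u) / (v - u) < (f v' - f u') / (v' - u') := by
  have huv' : u < v' := lt_of_lt_of_le h1 hv
  have step1 : (f v - f u) / (v - u) ≤ (f v' - f u) / (v' - u) :=
    hconv.convexOn.secant_mono (Set.mem_univ u) (Set.mem_univ v) (Set.mem_univ v')
      (ne_of_gt h1) (ne_of_gt huv') hv
  have step2 : (f u - f v') / (u - v') < (f u' - f v') / (u' - v') :=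
    hconv.secant_strict_mono (Set.mem_univ v') (Set.mem_univ u) (Set.mem_univ u')
      (ne_of_lt huv') (ne_of_lt h2) hu
  rw [← wk_slope_comm f u v', ← wk_slope_comm f u' v'] at step2
  exact lt_of_le_of_lt step1 step2

private lemma wk_slope_minmax (f : ℝ → ℝ) (a b : ℝ) :
    (f b - f a) / (b - a) = (f (max a b) - f (min a b)) / (max a b - min a b) := by
  rcases le_total a b with h | h
  · rw [max_eq_right h, min_eq_left h]
  · rw [max_eq_left h, min_eq_right h, wk_slope_comm]

private lemma wk_abel_pos (m : ℕ) (hm : 0 < m) (d t : ℕ → ℝ)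
    (hdm : ∀ i j, i ≤ j → j < m → d i ≤ d j)
    (hdneg : ∀ i, i < m → d i < 0)
    (ht0 : ∀ i, i < m → t i ≠ 0)
    (hT : ∀ k, k ≤ m → ∑ i ∈ range k, t i ≤ 0)
    (hkey : ∀ p q, p < q → q < m → t p < 0 → 0 < t q → d p < d q) :
    0 < ∑ i ∈ range m, d i * t i := by
  set T : ℕ → ℝ := fun k => ∑ i ∈ range k, t i with hTdef
  have habel : ∑ i ∈ range m, d i * t i
      = d (m-1) * T m - ∑ i ∈ range (m-1), (d (i+1) - d i) * T (i+1) := by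
    simpa [smul_eq_mul] using Finset.sum_range_by_parts d t m
  have hterm : ∀ i ∈ range (m-1), (d (i+1) - d i) * T (i+1) ≤ 0 := by
    intro i hi
    rw [mem_range] at hi
    have h1 : 0 ≤ d (i+1) - d i := sub_nonneg.2 (hdm i (i+1) (by omega) (by omega))
    have h2 : T (i+1) ≤ 0 := hT (i+1) (by omega)
    exact mul_nonpos_of_nonneg_of_nonpos h1 h2
  have hdlast : d (m-1) < 0 := hdneg (m-1) (by omega)
  have hTm : T m ≤ 0 := hT m le_rfl
  rcases lt_or_eq_of_le hTm with hTm' | hTm'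
  · have h1 : 0 < d (m-1) * T m := mul_pos_of_neg_of_neg hdlast hTm'
    have h2 : ∑ i ∈ range (m-1), (d (i+1) - d i) * T (i+1) ≤ 0 := sum_nonpos hterm
    linarith
  · -- T m = 0
    have hTm0 : T m = 0 := hTm'
    have hT1 : T 1 < 0 := by
      have := hT 1 hm
      rcases lt_or_eq_of_le this with h | h
      · exact h
      · exfalso; exact ht0 0 hm (by simpa using h)
    have hm2 : 2 ≤ m := by
      by_contra hcon
      push_neg at hcon
      have hm1 : m = 1 := by omega
      rw [hm1] at hTm0
      rw [hTm0] at hT1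
      exact lt_irrefl _ hT1
    -- q : largest k < m with T k < 0
    have hQne : (1 : ℕ) ∈ (range m).filter (fun k => T k < 0) := by
      simp only [mem_filter, mem_range]; exact ⟨by omega, hT1⟩
    set Q := (range m).filter (fun k => T k < 0) with hQdef
    set q := Q.max' ⟨1, hQne⟩ with hqdef
    have hqQ : q ∈ Q := Q.max'_mem _
    rw [hQdef, mem_filter, mem_range] at hqQ
    obtain ⟨hqm, hTq⟩ := hqQ
    have hq1 : 1 ≤ q := Q.le_max' 1 hQne
    have hTq1 : T (q+1) = 0 := by
      rcases eq_or_lt_of_le (Nat.succ_le_of_lt hqm) with h | h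
      · rw [show q + 1 = m from h]; exact hTm0
      · have hle : T (q+1) ≤ 0 := hT (q+1) (by omega)
        rcases lt_or_eq_of_le hle with h' | h'
        · exfalso
          have : q + 1 ∈ Q := by
            rw [hQdef, mem_filter, mem_range]; exact ⟨h, h'⟩
          have := Q.le_max' _ this
          omega
        · exact h'
    have htq : 0 < t q := by
      have : T (q+1) = T q + t q := Finset.sum_range_succ t q
      rw [hTq1] at this; linarith
    -- p : largest i < q with t i < 0
    have hPne : ∃ i, i ∈ (range q).filter (fun i => t i < 0) := by
      by_contra h
      push_neg at h
      have : 0 ≤ T q := by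
        apply sum_nonneg
        intro i hi
        by_contra h'
        exact h i (by rw [mem_filter]; exact ⟨hi, by linarith⟩)
      linarith
    set P := (range q).filter (fun i => t i < 0) with hPdef
    obtain ⟨i₁, hi₁⟩ := hPne
    set p := P.max' ⟨i₁, hi₁⟩ with hpdef
    have hpP : p ∈ P := P.max'_mem _
    rw [hPdef, mem_filter, mem_range] at hpP
    obtain ⟨hpq, htp⟩ := hpP
    have hdpq : d p < d q := hkey p q hpq hqm htp htq
    -- T k < 0 for p < k ≤ q
    have hTmid : ∀ k, p < k → k ≤ q → T k < 0 := by
      intro k hk1 hk2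
      have hsum : T q - T k = ∑ i ∈ Ico k q, t i := (Finset.sum_Ico_eq_sub t hk2).symm
      have hnn : 0 ≤ ∑ i ∈ Ico k q, t i := by
        apply sum_nonneg
        intro i hi
        rw [mem_Ico] at hi
        by_contra h'
        have : i ∈ P := by
          rw [hPdef, mem_filter, mem_range]; exact ⟨hi.2, by linarith⟩
        have := P.le_max' _ this
        omega
      linarith
    -- find a strict jump of d in [p, q)
    have hjump : ∃ i, p ≤ i ∧ i < q ∧ d i < d (i+1) := by
      by_contra h
      push_neg at h
      have hmono : ∀ k, p ≤ k → k ≤ q → d k ≤ d p := by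
        intro k hk
        induction k, hk using Nat.le_induction with
        | base => intro _; exact le_rfl
        | succ k hk ih =>
          intro hkq
          have hk' : k < q := by omega
          have := h k hk hk'
          have := ih (by omega)
          linarith
      have := hmono q (by omega) le_rfl
      linarith
    obtain ⟨i₀, hpi, hiq, hjmp⟩ := hjump
    have hi₀mem : i₀ ∈ range (m-1) := by rw [mem_range]; omega
    have hterm0 : (d (i₀+1) - d i₀) * T (i₀+1) < 0 :=
      mul_neg_of_pos_of_neg (by linarith) (hTmid (i₀+1) (by omega) (by omega))
    have hsplit : ∑ i ∈ range (m-1), (d (i+1) - d i) * T (i+1)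
        = (d (i₀+1) - d i₀) * T (i₀+1)
          + ∑ i ∈ (range (m-1)).erase i₀, (d (i+1) - d i) * T (i+1) :=
      (Finset.add_sum_erase _ _ hi₀mem).symm
    have hrest : ∑ i ∈ (range (m-1)).erase i₀, (d (i+1) - d i) * T (i+1) ≤ 0 := by
      apply sum_nonpos
      intro i hi
      exact hterm i (Finset.mem_of_mem_erase hi)
    have hfirst : 0 ≤ d (m-1) * T m := by rw [hTm0]; simp
    rw [habel, hsplit]
    linarith

private lemma wk_key (f : ℝ → ℝ) (hconv : StrictConvexOn ℝ Set.univ f) (hanti : Antitone f)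
    (n : ℕ) (x y : ℕ → ℝ)
    (hx : ∀ i j, i ≤ j → j < n → x i ≤ x j)
    (hy : ∀ i j, i ≤ j → j < n → y i ≤ y j)
    (hpre : ∀ k, k ≤ n → ∑ i ∈ range k, y i ≤ ∑ i ∈ range k, x i)
    (hsum : ∑ i ∈ range n, f (x i) = ∑ i ∈ range n, f (y i)) :
    ∀ i, i < n → x i = y i := by
  classical
  by_contra hcon
  push_neg at hcon
  obtain ⟨i₀, hi₀n, hi₀⟩ := hcon
  set s := (range n).filter (fun i => x i ≠ y i) with hsdef
  have hsne : s.Nonempty := ⟨i₀, by rw [hsdef, mem_filter, mem_range]; exact ⟨hi₀n, hi₀⟩⟩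
  set m := s.card with hmdef
  have hm : 0 < m := Finset.card_pos.2 hsne
  set e := s.orderEmbOfFin (rfl : s.card = m) with hedef
  set E : ℕ → ℕ := fun j => if h : j < m then e ⟨j, h⟩ else n + j with hEdef
  have hEs : ∀ j, j < m → E j ∈ s := by
    intro j hj
    rw [hEdef]; simp only [hj, dif_pos]
    exact Finset.orderEmbOfFin_mem s rfl ⟨j, hj⟩
  have hEn : ∀ j, j < m → E j < n := by
    intro j hj
    have := hEs j hj
    rw [hsdef, mem_filter, mem_range] at this
    exact this.1
  have hExy : ∀ j, j < m → x (E j) ≠ y (E j) := by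
    intro j hj
    have := hEs j hj
    rw [hsdef, mem_filter] at this
    exact this.2
  have hEmono : ∀ j j', j < j' → j' < m → E j < E j' := by
    intro j j' hjj hj'
    have hj : j < m := lt_trans hjj hj'
    rw [hEdef]; simp only [hj, hj', dif_pos]
    exact e.strictMono (show (⟨j, hj⟩ : Fin m) < ⟨j', hj'⟩ from hjj)
  have hEmono' : ∀ j j', j ≤ j' → j' < m → E j ≤ E j' := by
    intro j j' hjj hj'
    rcases eq_or_lt_of_le hjj with rfl | h
    · exact le_rfl
    · exact le_of_lt (hEmono j j' h hj')
  have hEsurj : ∀ i, i ∈ s → ∃ j, j < m ∧ E j = i := by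
    intro i hi
    have : i ∈ Set.range ⇑e := by
      rw [hedef, Finset.range_orderEmbOfFin]; exact hi
    obtain ⟨j, hj⟩ := this
    refine ⟨j.1, j.2, ?_⟩
    rw [hEdef]; simp only [j.2, dif_pos, Fin.eta]; exact (dif_pos j.2).trans hj
  set d : ℕ → ℝ := fun j => (f (y (E j)) - f (x (E j))) / (y (E j) - x (E j)) with hddef
  set t : ℕ → ℝ := fun j => y (E j) - x (E j) with htdef
  -- hypotheses for wk_abel_pos
  have hdm : ∀ i j, i ≤ j → j < m → d i ≤ d j := by
    intro i j hij hj
    rcases eq_or_lt_of_le hij with rfl | hij'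
    · exact le_rfl
    have hi : i < m := lt_trans hij' hj
    rw [hddef]
    dsimp only
    rw [wk_slope_minmax f (x (E i)) (y (E i)), wk_slope_minmax f (x (E j)) (y (E j))]
    have hEij : E i ≤ E j := hEmono' i j hij hj
    have hEin : E i < n := hEn i hi
    have hEjn : E j < n := hEn j hj
    exact wk_slope_mono hconv.convexOn
      (min_le_min (hx _ _ hEij hEjn) (hy _ _ hEij hEjn))
      (max_le_max (hx _ _ hEij hEjn) (hy _ _ hEij hEjn))
      (min_lt_max.2 (hExy i hi)) (min_lt_max.2 (hExy j hj))
  have hdneg : ∀ j, j < m → d j < 0 := by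
    intro j hj
    rw [hddef]
    dsimp only
    rw [wk_slope_minmax f (x (E j)) (y (E j))]
    exact wk_slope_neg (wk_strictAnti hconv hanti) (min_lt_max.2 (hExy j hj))
  have ht0 : ∀ j, j < m → t j ≠ 0 := by
    intro j hj
    rw [htdef]
    exact sub_ne_zero.2 (hExy j hj).symm
  have hkey : ∀ p q, p < q → q < m → t p < 0 → 0 < t q → d p < d q := by
    intro p q hpq hq htp htq
    have hp : p < m := lt_trans hpq hq
    rw [htdef] at htp htq
    dsimp only at htp htq
    have h1 : y (E p) < x (E p) := by linarith
    have h2 : x (E q) < y (E q) := by linarith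
    have hEpq : E p ≤ E q := le_of_lt (hEmono p q hpq hq)
    have hxx : x (E p) ≤ x (E q) := hx _ _ hEpq (hEn q hq)
    rw [hddef]
    dsimp only
    rw [wk_slope_comm f (x (E p)) (y (E p))]
    exact wk_slope_strict hconv (lt_of_lt_of_le h1 hxx) (by linarith) h1 h2
  have hT : ∀ k, k ≤ m → ∑ j ∈ range k, t j ≤ 0 := by
    intro k hk
    rcases Nat.eq_zero_or_pos k with rfl | hk1
    · simp
    have hk1m : k - 1 < m := by omega
    set K := E (k - 1) + 1 with hKdef
    have hKn : K ≤ n := hEn (k - 1) hk1m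
    have hinj : Set.InjOn E (range k) := by
      intro a ha b hb hab
      rw [coe_range, Set.mem_Iio] at ha hb
      by_contra hne
      rcases lt_or_gt_of_ne hne with h | h
      · exact absurd hab (ne_of_lt (hEmono a b h (by omega)))
      · exact absurd hab.symm (ne_of_lt (hEmono b a h (by omega)))
    have himg : (range k).image E = s.filter (fun i => i < K) := by
      ext i
      rw [mem_image, mem_filter]
      constructor
      · rintro ⟨j, hj, rfl⟩
        rw [mem_range] at hj
        refine ⟨hEs j (by omega), ?_⟩
        have := hEmono' j (k - 1) (by omega) hk1m
        omega
      · rintro ⟨hi, hiK⟩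
        obtain ⟨j, hjm, rfl⟩ := hEsurj i hi
        refine ⟨j, ?_, rfl⟩
        rw [mem_range]
        by_contra hjk
        push_neg at hjk
        have : E (k - 1) < E j := hEmono (k - 1) j (by omega) hjm
        omega
    have hstep1 : ∑ j ∈ range k, t j = ∑ i ∈ (range k).image E, (y i - x i) := by
      rw [Finset.sum_image (fun a ha b hb hab => hinj (by simpa using ha) (by simpa using hb) hab)]
    have hfilt : s.filter (fun i => i < K) = (range K).filter (fun i => x i ≠ y i) := by
      rw [hsdef]
      ext i
      simp only [mem_filter, mem_range]
      constructor
      · rintro ⟨⟨h1, h2⟩, h3⟩; exact ⟨h3, h2⟩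
      · rintro ⟨h1, h2⟩; exact ⟨⟨by omega, h2⟩, h1⟩
    have hstep2 : ∑ i ∈ (range K).filter (fun i => x i ≠ y i), (y i - x i)
        = ∑ i ∈ range K, (y i - x i) := by
      apply Finset.sum_filter_of_ne
      intro i _ hne
      intro hxy
      exact hne (by rw [hxy]; ring)
    rw [hstep1, himg, hfilt, hstep2, sum_sub_distrib]
    have := hpre K hKn
    linarith
  have habel := wk_abel_pos m hm d t hdm hdneg ht0 hT hkey
  -- now derive contradiction with hsum
  have hzero : ∑ i ∈ range n, (f (y i) - f (x i)) = 0 := by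
    rw [sum_sub_distrib]; linarith
  have hfs : ∑ i ∈ s, (f (y i) - f (x i)) = ∑ i ∈ range n, (f (y i) - f (x i)) := by
    rw [hsdef]
    apply Finset.sum_filter_of_ne
    intro i _ hne hxy
    exact hne (by rw [hxy]; ring)
  have hseq : s = (range m).image E := by
    apply Finset.eq_of_subset_of_card_le
    · intro i hi
      obtain ⟨j, hj, rfl⟩ := hEsurj i hi
      exact mem_image.2 ⟨j, mem_range.2 hj, rfl⟩
    · rw [Finset.card_image_of_injOn, card_range]
      intro a ha b hb hab
      rw [coe_range, Set.mem_Iio] at ha hb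
      by_contra hne
      rcases lt_or_gt_of_ne hne with h | h
      · exact absurd hab (ne_of_lt (hEmono a b h hb))
      · exact absurd hab.symm (ne_of_lt (hEmono b a h ha))
  have hEinjm : ∀ a ∈ range m, ∀ b ∈ range m, E a = E b → a = b := by
    intro a ha b hb hab
    rw [mem_range] at ha hb
    by_contra hne
    rcases lt_or_gt_of_ne hne with h | h
    · exact absurd hab (ne_of_lt (hEmono a b h hb))
    · exact absurd hab.symm (ne_of_lt (hEmono b a h ha))
  have hfinal : ∑ i ∈ s, (f (y i) - f (x i)) = ∑ j ∈ range m, d j * t j := by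
    rw [hseq, Finset.sum_image hEinjm]
    apply Finset.sum_congr rfl
    intro j hj
    rw [mem_range] at hj
    rw [hddef, htdef]
    dsimp only
    rw [div_mul_cancel₀]
    exact sub_ne_zero.2 (hExy j hj).symm
  rw [hfs, hzero] at hfinal
  rw [← hfinal] at habel
  exact lt_irrefl _ habel


private lemma wk_take_sum (l : List ℝ) : ∀ k, k ≤ l.length →
    (l.take k).sum = ∑ i ∈ range k, l.getD i 0 := by
  intro k
  induction k with
  | zero => simp
  | succ k ih =>
    intro hk
    have hkl : k < l.length := by omega
    rw [List.sum_take_succ l k hkl, sum_range_succ, ih (by omega), List.getD_eq_getElem l 0 hkl]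

private lemma wk_map_sum (l : List ℝ) (g : ℝ → ℝ) :
    (l.map g).sum = ∑ i ∈ range l.length, g (l.getD i 0) := by
  have h1 : (l.map g).sum = ((l.map g).take (l.map g).length).sum := by
    rw [List.take_length]
  rw [h1, wk_take_sum _ _ le_rfl, List.length_map]
  apply Finset.sum_congr rfl
  intro i hi
  rw [mem_range] at hi
  rw [List.getD_eq_getElem (l.map g) 0 (by simpa using hi), List.getD_eq_getElem l 0 hi,
    List.getElem_map]

private lemma wk_sorted_mono (l : List ℝ) (hs : List.Pairwise (· ≤ ·) l) :
    ∀ i j, i ≤ j → j < l.length → l.getD i 0 ≤ l.getD j 0 := by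
  intro i j hij hj
  rcases eq_or_lt_of_le hij with rfl | h
  · exact le_rfl
  · have hi : i < l.length := by omega
    rw [List.getD_eq_getElem l 0 hi, List.getD_eq_getElem l 0 hj]
    exact hs.rel_get_of_lt (show (⟨i, hi⟩ : Fin l.length) < ⟨j, hj⟩ from h)

private lemma wk_multiset_sum (q : ℕ) (C : Fin q → ℝ) (g : ℝ → ℝ) :
    ∑ i, g (C i) = ∑ i ∈ range (((Finset.univ.val.map C : Multiset ℝ)).sort (· ≤ ·)).length,
      g ((((Finset.univ.val.map C : Multiset ℝ)).sort (· ≤ ·)).getD i 0) := by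
  rw [← wk_map_sum]
  have h1 : ((((Finset.univ.val.map C : Multiset ℝ)).sort (· ≤ ·)).map g : Multiset ℝ).sum
      = ((Finset.univ.val.map C : Multiset ℝ).map g).sum := by
    rw [← Multiset.map_coe, Multiset.sort_eq]
  rw [← Multiset.sum_coe, h1, Multiset.map_map]
  rfl

/-- Equality case of the weak Karamata inequality for strictly convex decreasing
functions: equality forces the nondecreasing rearrangements to coincide. -/
theorem weak_karamata_equality {n : ℕ} (f : ℝ → ℝ)
    (hconv : StrictConvexOn ℝ Set.univ f) (hanti : Antitone f) (A B : Fin n → ℝ)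
    (hmaj : WeakMaj (seqMultiset A) (seqMultiset B))
    (heq : ∑ i, f (A i) = ∑ i, f (B i)) :
    (seqMultiset A).sort (· ≤ ·) = (seqMultiset B).sort (· ≤ ·) := by
  classical
  set LA := (seqMultiset A).sort (· ≤ ·) with hLA
  set LB := (seqMultiset B).sort (· ≤ ·) with hLB
  have hlenA : LA.length = n := by
    rw [hLA, Multiset.length_sort]; simp [seqMultiset]
  have hlenB : LB.length = n := by
    rw [hLB, Multiset.length_sort]; simp [seqMultiset]
  have hsA : List.Pairwise (· ≤ ·) LA := Multiset.pairwise_sort _ _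
  have hsB : List.Pairwise (· ≤ ·) LB := Multiset.pairwise_sort _ _
  set x : ℕ → ℝ := fun i => LA.getD i 0 with hxdef
  set y : ℕ → ℝ := fun i => LB.getD i 0 with hydef
  have hx : ∀ i j, i ≤ j → j < n → x i ≤ x j := by
    intro i j hij hj
    exact wk_sorted_mono LA hsA i j hij (by omega)
  have hy : ∀ i j, i ≤ j → j < n → y i ≤ y j := by
    intro i j hij hj
    exact wk_sorted_mono LB hsB i j hij (by omega)
  have hpre : ∀ k, k ≤ n → ∑ i ∈ Finset.range k, y i ≤ ∑ i ∈ Finset.range k, x i := by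
    intro k hk
    have h := hmaj k
    unfold kSmallestSum at h
    rw [← hLA, ← hLB] at h
    rw [wk_take_sum LA k (by omega), wk_take_sum LB k (by omega)] at h
    exact h
  have hsumA : ∑ i ∈ Finset.range n, f (x i) = ∑ i, f (A i) := by
    have := wk_multiset_sum n A f
    rw [show (Finset.univ.val.map A : Multiset ℝ) = seqMultiset A from rfl] at this
    rw [← hLA] at this
    rw [this, hlenA]
  have hsumB : ∑ i ∈ Finset.range n, f (y i) = ∑ i, f (B i) := by
    have := wk_multiset_sum n B f
    rw [show (Finset.univ.val.map B : Multiset ℝ) = seqMultiset B from rfl] at this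
    rw [← hLB] at this
    rw [this, hlenB]
  have key := wk_key f hconv hanti n x y hx hy hpre (by rw [hsumA, hsumB]; exact heq)
  apply List.ext_getElem (by rw [hlenA, hlenB])
  intro i h1 h2
  have hkey := key i (by omega)
  rw [hxdef, hydef] at hkey
  dsimp only at hkey
  rw [List.getD_eq_getElem LA 0 h1, List.getD_eq_getElem LB 0 h2] at hkey
  exact hkey
end

section
/- Let ρ : S × S → ℝ be symmetric and h : ℝ → ℝ be convex and increasing. If X ⊆ S with |X| = m is an M-set for (S, ρ, m), then X is an M-set for (S, h∘ρ, m). -/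
/-- X is an M-set for (S, ρ, m): no injective m-configuration Y strictly weakly
majorizes X, i.e. whenever R_ρ(Y) ▷ R_ρ(X) we also have R_ρ(X) ▷ R_ρ(Y). -/
def IsMSet {S : Type*} {m : ℕ} (ρ : S → S → ℝ) (X : Fin m → S) : Prop :=
  ∀ Y : Fin m → S, Function.Injective Y →
    WeakMaj (pairMultiset ρ Y) (pairMultiset ρ X) →
    WeakMaj (pairMultiset ρ X) (pairMultiset ρ Y)

/-! ### Auxiliary lemmas -/

lemma take_sum_eq_range (l : List ℝ) : ∀ k, k ≤ l.length →
    (l.take k).sum = ∑ i ∈ Finset.range k, l.getD i 0 := by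
  intro k hk
  induction k with
  | zero => simp
  | succ k ih =>
    have hk' : k < l.length := hk
    rw [List.sum_take_succ _ _ hk', ih (le_of_lt hk'), Finset.sum_range_succ]
    congr 1
    simp [List.getD_eq_getElem?_getD, List.getElem?_eq_getElem hk']

lemma map_getD_eq (l : List ℝ) (g : ℝ → ℝ) (i : ℕ) (hi : i < l.length) :
    (l.map g).getD i 0 = g (l.getD i 0) := by
  have hi' : i < (l.map g).length := by simpa using hi
  simp [List.getD_eq_getElem?_getD, List.getElem?_eq_getElem, hi, hi']

lemma sorted_getD_mono (l : List ℝ) (hs : l.Pairwise (· ≤ ·)) (i j : ℕ)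
    (hij : i ≤ j) (hj : j < l.length) : l.getD i 0 ≤ l.getD j 0 := by
  have hi : i < l.length := lt_of_le_of_lt hij hj
  rw [List.getD_eq_getElem?_getD, List.getD_eq_getElem?_getD,
    List.getElem?_eq_getElem hi, List.getElem?_eq_getElem hj]
  rcases eq_or_lt_of_le hij with rfl | hlt
  · exact le_rfl
  · exact List.pairwise_iff_getElem.mp hs i j hi hj hlt

lemma sort_map_mono (M : Multiset ℝ) {h : ℝ → ℝ} (hm : Monotone h) :
    (M.map h).sort (· ≤ ·) = (M.sort (· ≤ ·)).map h := by
  have hperm : List.Perm ((M.map h).sort (· ≤ ·)) ((M.sort (· ≤ ·)).map h) := by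
    rw [← Multiset.coe_eq_coe, Multiset.sort_eq, ← Multiset.map_coe, Multiset.sort_eq]
  exact List.Perm.eq_of_pairwise' (Multiset.pairwise_sort _ _)
    (List.Pairwise.map h (fun a b hab => hm hab) (Multiset.pairwise_sort M (· ≤ ·))) hperm

/-- Generalized slope monotonicity for convex functions on `univ`. -/
lemma slope_shift {h : ℝ → ℝ} (hconv : ConvexOn ℝ Set.univ h)
    {x1 y1 x2 y2 : ℝ} (h1 : x1 < y1) (h2 : x2 < y2) (hx : x1 ≤ x2) (hy : y1 ≤ y2) :
    (h y1 - h x1) / (y1 - x1) ≤ (h y2 - h x2) / (y2 - x2) := by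
  have s1 : (h y1 - h x1) / (y1 - x1) ≤ (h y2 - h x1) / (y2 - x1) :=
    hconv.secant_mono (Set.mem_univ x1) (Set.mem_univ y1) (Set.mem_univ y2)
      (ne_of_gt h1) (ne_of_gt (lt_of_lt_of_le h1 hy)) hy
  have s2 : (h x1 - h y2) / (x1 - y2) ≤ (h x2 - h y2) / (x2 - y2) :=
    hconv.secant_mono (Set.mem_univ y2) (Set.mem_univ x1) (Set.mem_univ x2)
      (ne_of_lt (lt_of_lt_of_le h1 hy)) (ne_of_lt h2) hx
  have e1 : (h x1 - h y2) / (x1 - y2) = (h y2 - h x1) / (y2 - x1) := by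
    rw [← neg_div_neg_eq]; ring_nf
  have e2 : (h x2 - h y2) / (x2 - y2) = (h y2 - h x2) / (y2 - x2) := by
    rw [← neg_div_neg_eq]; ring_nf
  rw [e1, e2] at s2
  linarith

/-- Abel-summation positivity. -/
lemma abel_nonneg (c d : ℕ → ℝ) :
    ∀ K : ℕ, (∀ i, i < K → c (i + 1) ≤ c i) → (∀ i, i ≤ K → 0 ≤ c i) →
    (∀ m, m ≤ K → 0 ≤ ∑ i ∈ Finset.range m, d i) →
    c K * ∑ i ∈ Finset.range K, d i ≤ ∑ i ∈ Finset.range K, c i * d i := by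
  intro K
  induction K with
  | zero => simp
  | succ K ih =>
    intro hdec hpos hD
    have h1 := ih (fun i hi => hdec i (by omega)) (fun i hi => hpos i (by omega))
      (fun m hm => hD m (by omega))
    rw [Finset.sum_range_succ, Finset.sum_range_succ]
    have hDK1 : 0 ≤ ∑ i ∈ Finset.range K, d i + d K := by
      have := hD (K + 1) le_rfl
      rwa [Finset.sum_range_succ] at this
    have h2 : c (K + 1) * (∑ i ∈ Finset.range K, d i + d K)
        ≤ c K * (∑ i ∈ Finset.range K, d i + d K) :=
      mul_le_mul_of_nonneg_right (hdec K (Nat.lt_succ_self K)) hDK1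
    nlinarith [h1, h2]

/-- The key comparison: partial-sum domination of `h`-values implies
partial-sum domination of values, for `h` convex and strictly monotone. -/
lemma key_sum_le (h : ℝ → ℝ) (hconv : ConvexOn ℝ Set.univ h) (hmono : StrictMono h)
    (n : ℕ) (a b : ℕ → ℝ)
    (ha : ∀ i j, i ≤ j → j < n → a i ≤ a j)
    (hb : ∀ i j, i ≤ j → j < n → b i ≤ b j)
    (hyp : ∀ k, k ≤ n → ∑ i ∈ Finset.range k, h (a i) ≤ ∑ i ∈ Finset.range k, h (b i)) :
    ∀ k, k ≤ n → ∑ i ∈ Finset.range k, a i ≤ ∑ i ∈ Finset.range k, b i := by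
  intro k hk
  rcases Nat.eq_zero_or_pos k with rfl | hkpos
  · simp
  set T := (Finset.range k).filter (fun i => a i < b i) with hT
  have hεex : ∃ ε : ℝ, 0 < ε ∧ ∀ i, i < k → a i < b i → ε ≤ b i - a i := by
    rcases T.eq_empty_or_nonempty with he | hne
    · refine ⟨1, one_pos, fun i hik hab => ?_⟩
      exfalso
      have : i ∈ T := by
        rw [hT, Finset.mem_filter]
        exact ⟨Finset.mem_range.mpr hik, hab⟩
      rw [he] at this
      exact absurd this (Finset.notMem_empty i)
    · refine ⟨T.inf' hne fun i => b i - a i, ?_, ?_⟩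
      · rw [Finset.lt_inf'_iff]
        intro i hi
        rw [hT, Finset.mem_filter] at hi
        linarith [hi.2]
      · intro i hik hab
        have hmem : i ∈ T := by
          rw [hT, Finset.mem_filter]
          exact ⟨Finset.mem_range.mpr hik, hab⟩
        exact Finset.inf'_le _ hmem
  obtain ⟨ε, hεpos, hεle⟩ := hεex
  set B : ℕ → ℝ := fun i => b (min i (k - 1)) with hB
  have hBmono : ∀ i j, i ≤ j → B i ≤ B j := by
    intro i j hij
    exact hb _ _ (min_le_min_right _ hij) (by omega)
  have hBi : ∀ i, i < k → B i = b i := by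
    intro i hi
    simp [hB, Nat.min_eq_left (by omega : i ≤ k - 1)]
  set ℓ : ℕ → ℝ := fun i => (h (B i) - h (B i - ε)) / ε with hℓ
  have hℓpos : ∀ i, 0 < ℓ i := by
    intro i
    apply div_pos _ hεpos
    have : B i - ε < B i := by linarith
    linarith [hmono this]
  have hℓmono : ∀ i j, i ≤ j → ℓ i ≤ ℓ j := by
    intro i j hij
    have hBij := hBmono i j hij
    have e1 : ℓ i = (h (B i) - h (B i - ε)) / (B i - (B i - ε)) := by
      rw [hℓ]; congr 1; ring
    have e2 : ℓ j = (h (B j) - h (B j - ε)) / (B j - (B j - ε)) := by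
      rw [hℓ]; congr 1; ring
    rw [e1, e2]
    exact slope_shift hconv (by linarith) (by linarith) (by linarith) hBij
  set c : ℕ → ℝ := fun i => (ℓ i)⁻¹ with hc
  have hcpos : ∀ i, 0 ≤ c i := fun i => le_of_lt (inv_pos.mpr (hℓpos i))
  have hcdec : ∀ i j, i ≤ j → c j ≤ c i := by
    intro i j hij
    exact inv_anti₀ (hℓpos i) (hℓmono i j hij)
  have hpoint : ∀ i, i < k → c i * (h (b i) - h (a i)) ≤ b i - a i := by
    intro i hik
    have hBieq := hBi i hik
    rcases lt_trichotomy (a i) (b i) with hlt | heq | hgt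
    · have hge : ε ≤ b i - a i := hεle i hik hlt
      have hs : (h (b i) - h (a i)) / (b i - a i) ≤ ℓ i := by
        have e2 : ℓ i = (h (B i) - h (B i - ε)) / (B i - (B i - ε)) := by
          rw [hℓ]; congr 1; ring
        rw [e2, hBieq]
        exact slope_shift hconv hlt (by linarith) (by linarith) le_rfl
      have hba : 0 < b i - a i := by linarith
      rw [div_le_iff₀ hba] at hs
      have h1 : h (b i) - h (a i) ≤ ℓ i * (b i - a i) := hs
      have h2 : c i * (h (b i) - h (a i)) ≤ c i * (ℓ i * (b i - a i)) :=
        mul_le_mul_of_nonneg_left h1 (hcpos i)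
      have h3 : c i * (ℓ i * (b i - a i)) = b i - a i := by
        rw [hc]
        field_simp
        exact div_self (ne_of_gt (hℓpos i))
      linarith
    · simp [heq]
    · have hs : ℓ i ≤ (h (a i) - h (b i)) / (a i - b i) := by
        have e2 : ℓ i = (h (B i) - h (B i - ε)) / (B i - (B i - ε)) := by
          rw [hℓ]; congr 1; ring
        rw [e2, hBieq]
        exact slope_shift hconv (by linarith) hgt (by linarith) (le_of_lt hgt)
      have hab : 0 < a i - b i := by linarith
      rw [le_div_iff₀ hab] at hs
      have h1 : ℓ i * (a i - b i) ≤ h (a i) - h (b i) := hs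
      have h2 : c i * (ℓ i * (a i - b i)) ≤ c i * (h (a i) - h (b i)) :=
        mul_le_mul_of_nonneg_left h1 (hcpos i)
      have h3 : c i * (ℓ i * (a i - b i)) = a i - b i := by
        rw [hc]; field_simp
        exact div_self (ne_of_gt (hℓpos i))
      nlinarith
  set d : ℕ → ℝ := fun i => h (b i) - h (a i) with hd
  have habel : c k * ∑ i ∈ Finset.range k, d i ≤ ∑ i ∈ Finset.range k, c i * d i :=
    abel_nonneg c d k (fun i _ => hcdec i (i + 1) (by omega)) (fun i _ => hcpos i)
      (fun m hm => by
        have := hyp m (le_trans hm hk)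
        rw [hd]
        simp only [Finset.sum_sub_distrib]
        linarith)
  have hDk : 0 ≤ ∑ i ∈ Finset.range k, d i := by
    have := hyp k hk
    rw [hd]
    simp only [Finset.sum_sub_distrib]
    linarith
  have h0 : 0 ≤ ∑ i ∈ Finset.range k, c i * d i :=
    le_trans (mul_nonneg (hcpos k) hDk) habel
  have hfinal : ∑ i ∈ Finset.range k, c i * d i ≤ ∑ i ∈ Finset.range k, (b i - a i) :=
    Finset.sum_le_sum fun i hi => hpoint i (Finset.mem_range.mp hi)
  have := le_trans h0 hfinal
  rw [Finset.sum_sub_distrib] at this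
  linarith

lemma kSmallestSum_eq_range (M : Multiset ℝ) (k : ℕ) (hk : k ≤ (M.sort (· ≤ ·)).length) :
    kSmallestSum M k = ∑ i ∈ Finset.range k, (M.sort (· ≤ ·)).getD i 0 :=
  take_sum_eq_range _ k hk

/-- Transfer of weak majorization down along a convex strictly monotone map. -/
lemma weakMaj_of_map_weakMaj (h : ℝ → ℝ) (hconv : ConvexOn ℝ Set.univ h)
    (hmono : StrictMono h) (A B : Multiset ℝ)
    (hcard : Multiset.card A = Multiset.card B)
    (hyp : WeakMaj (B.map h) (A.map h)) : WeakMaj B A := by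
  set la := A.sort (· ≤ ·) with hla
  set lb := B.sort (· ≤ ·) with hlb
  have hlen : la.length = lb.length := by
    rw [hla, hlb, Multiset.length_sort, Multiset.length_sort, hcard]
  set n := la.length with hn
  set a : ℕ → ℝ := fun i => la.getD i 0 with haf
  set b : ℕ → ℝ := fun i => lb.getD i 0 with hbf
  have hmonA : ∀ i j, i ≤ j → j < n → a i ≤ a j := fun i j hij hj =>
    sorted_getD_mono la (Multiset.pairwise_sort _ _) i j hij hj
  have hmonB : ∀ i j, i ≤ j → j < n → b i ≤ b j := fun i j hij hj =>
    sorted_getD_mono lb (Multiset.pairwise_sort _ _) i j hij (hlen ▸ hj)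
  have hsortA : (A.map h).sort (· ≤ ·) = la.map h := sort_map_mono A hmono.monotone
  have hsortB : (B.map h).sort (· ≤ ·) = lb.map h := sort_map_mono B hmono.monotone
  have hyp' : ∀ k, k ≤ n → ∑ i ∈ Finset.range k, h (a i) ≤ ∑ i ∈ Finset.range k, h (b i) := by
    intro k hkn
    have e1 : kSmallestSum (A.map h) k = ∑ i ∈ Finset.range k, h (a i) := by
      rw [kSmallestSum, hsortA, take_sum_eq_range _ k (by simpa using hkn)]
      exact Finset.sum_congr rfl fun i hi =>
        map_getD_eq la h i (lt_of_lt_of_le (Finset.mem_range.mp hi) hkn)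
    have e2 : kSmallestSum (B.map h) k = ∑ i ∈ Finset.range k, h (b i) := by
      rw [kSmallestSum, hsortB, take_sum_eq_range _ k (by simp [← hlen]; omega)]
      exact Finset.sum_congr rfl fun i hi =>
        map_getD_eq lb h i (by have := Finset.mem_range.mp hi; omega)
    rw [← e1, ← e2]
    exact hyp k
  have key := key_sum_le h hconv hmono n a b hmonA hmonB hyp'
  intro k
  rcases le_or_gt k n with hkn | hkn
  · rw [kSmallestSum, kSmallestSum, ← hla, ← hlb,
      take_sum_eq_range la k hkn, take_sum_eq_range lb k (by omega)]
    exact key k hkn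
  · have e1 : (la.take k) = la.take n := by
      rw [List.take_of_length_le (by omega), List.take_of_length_le (by omega)]
    have e2 : (lb.take k) = lb.take n := by
      rw [List.take_of_length_le (by omega), List.take_of_length_le (by omega)]
    rw [kSmallestSum, kSmallestSum, ← hla, ← hlb, e1, e2,
      take_sum_eq_range la n le_rfl, take_sum_eq_range lb n (by omega)]
    exact key n le_rfl

/-- Mutual weak majorization forces equality of the multisets. -/
lemma eq_of_weakMaj_weakMaj (A B : Multiset ℝ)
    (hcard : Multiset.card A = Multiset.card B)
    (h1 : WeakMaj A B) (h2 : WeakMaj B A) : A = B := by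
  have hsum : ∀ k, kSmallestSum A k = kSmallestSum B k := fun k =>
    le_antisymm (h2 k) (h1 k)
  set la := A.sort (· ≤ ·) with hla
  set lb := B.sort (· ≤ ·) with hlb
  have htake : ∀ k, (la.take k).sum = (lb.take k).sum := fun k => hsum k
  have hlen : la.length = lb.length := by
    rw [hla, hlb, Multiset.length_sort, Multiset.length_sort, hcard]
  have hli : la = lb := by
    apply List.ext_getElem hlen
    intro i hi1 hi2
    have e1 := List.sum_take_succ la i hi1
    have e2 := List.sum_take_succ lb i hi2
    have t1 := htake i
    have t2 := htake (i + 1)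
    rw [e1, e2, t1] at t2
    linarith
  calc A = ↑la := (Multiset.sort_eq _ _).symm
    _ = ↑lb := by rw [hli]
    _ = B := Multiset.sort_eq _ _

lemma pairMultiset_comp {S : Type*} {m : ℕ} (ρ : S → S → ℝ) (h : ℝ → ℝ) (Z : Fin m → S) :
    pairMultiset (fun x y => h (ρ x y)) Z = (pairMultiset ρ Z).map h := by
  rw [pairMultiset, pairMultiset, Multiset.map_map]
  rfl

/-- An M-set for ρ is an M-set for h ∘ ρ whenever h is convex and increasing. -/
theorem isMSet_comp_of_convex_strictMono {S : Type*} {m : ℕ} (ρ : S → S → ℝ)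
    (hsym : ∀ x y, ρ x y = ρ y x) (h : ℝ → ℝ)
    (hconv : ConvexOn ℝ Set.univ h) (hmono : StrictMono h)
    (X : Fin m → S) (hX : Function.Injective X) (hM : IsMSet ρ X) :
    IsMSet (fun x y => h (ρ x y)) X := by
  intro Y hY hmaj
  rw [pairMultiset_comp, pairMultiset_comp] at hmaj ⊢
  have hcard : Multiset.card (pairMultiset ρ X) = Multiset.card (pairMultiset ρ Y) := by
    rw [pairMultiset, pairMultiset, Multiset.card_map, Multiset.card_map]
  have h1 : WeakMaj (pairMultiset ρ Y) (pairMultiset ρ X) :=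
    weakMaj_of_map_weakMaj h hconv hmono (pairMultiset ρ X) (pairMultiset ρ Y) hcard hmaj
  have h2 : WeakMaj (pairMultiset ρ X) (pairMultiset ρ Y) := hM Y hY h1
  have heq : pairMultiset ρ X = pairMultiset ρ Y :=
    eq_of_weakMaj_weakMaj _ _ hcard h2 h1
  rw [heq]
  exact fun k => le_rfl
end

section
/- Let T_1 ≤ T_2 ≤ … ≤ T_m be reals, and define recursively y_1 = min_{1≤k≤m} T_k/k, and for i ≥ 2, y_i = min_{k≥i} (T_k − y_1 − ⋯ − y_{i−1})/(k − i + 1). Then for any sequence A = (a_1,…,a_m) satisfying a_(1)+⋯+a_(i) ≤ T_i for all i (where a_(1) ≤ ⋯ ≤ a_(m) is the nondecreasing rearrangement), the sequence Y = (y_1,…,y_m) weakly majorizes A. -/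
/-- The sequence Y(T) defined by the greedy recursion
y_i = min_{k ≥ i} (T_k − y_1 − … − y_{i−1})/(k − i + 1)
weakly majorizes every sequence whose sorted partial sums are bounded by the T_i. -/
theorem greedy_seq_weakMaj {m : ℕ} (T : Fin m → ℝ) (hT : Monotone T)
    (y : Fin m → ℝ)
    (hy : ∀ i : Fin m, IsLeast
      {v : ℝ | ∃ k : Fin m, i ≤ k ∧
        v = (T k - ∑ j ∈ Finset.univ.filter (fun j : Fin m => j < i), y j) /
              (((k : ℕ) - (i : ℕ) + 1 : ℕ) : ℝ)} (y i))
    (A : Fin m → ℝ)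
    (hA : ∀ i : Fin m, kSmallestSum (seqMultiset A) ((i : ℕ) + 1) ≤ T i) :
    WeakMaj (seqMultiset y) (seqMultiset A) := by
  classical
  -- partial sums of y
  set S : ℕ → ℝ := fun n => ((List.ofFn y).take n).sum with hSdef
  have hS_filter : ∀ i : Fin m,
      (∑ j ∈ Finset.univ.filter (fun j : Fin m => j < i), y j) = S (i : ℕ) := by
    intro i
    simp only [hSdef]
    rw [List.sum_take_ofFn]
    apply Finset.sum_congr _ (fun _ _ => rfl)
    apply Finset.filter_congr
    intro j _
    exact Fin.lt_def
  -- basic consequences of hy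
  have hy_le : ∀ i k : Fin m, i ≤ k →
      S (i : ℕ) + (((k : ℕ) - (i : ℕ) + 1 : ℕ) : ℝ) * y i ≤ T k := by
    intro i k hik
    have hmem : (T k - ∑ j ∈ Finset.univ.filter (fun j : Fin m => j < i), y j) /
        (((k : ℕ) - (i : ℕ) + 1 : ℕ) : ℝ) ∈
        {v : ℝ | ∃ k' : Fin m, i ≤ k' ∧
          v = (T k' - ∑ j ∈ Finset.univ.filter (fun j : Fin m => j < i), y j) /
              (((k' : ℕ) - (i : ℕ) + 1 : ℕ) : ℝ)} := ⟨k, hik, rfl⟩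
    have hle := (hy i).2 hmem
    rw [hS_filter] at hle
    have hd : (0 : ℝ) < (((k : ℕ) - (i : ℕ) + 1 : ℕ) : ℝ) := by positivity
    rw [le_div_iff₀ hd] at hle
    linarith
  have hy_eq : ∀ i : Fin m, ∃ k : Fin m, i ≤ k ∧
      S (i : ℕ) + (((k : ℕ) - (i : ℕ) + 1 : ℕ) : ℝ) * y i = T k := by
    intro i
    obtain ⟨k, hik, hk⟩ := (hy i).1
    refine ⟨k, hik, ?_⟩
    rw [hS_filter] at hk
    have hd : (((k : ℕ) - (i : ℕ) + 1 : ℕ) : ℝ) ≠ 0 := by positivity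
    field_simp at hk
    push_cast at hk ⊢
    linarith
  -- successor formula for S
  have hSsucc : ∀ i : Fin m, S ((i : ℕ) + 1) = S (i : ℕ) + y i := by
    intro i
    simp only [hSdef]
    have hlen : (i : ℕ) < (List.ofFn y).length := by simp
    rw [List.sum_take_succ _ _ hlen]
    congr 1
    simp
  -- y is monotone (in successive steps, then globally)
  have hstep : ∀ i j : Fin m, (i : ℕ) + 1 = (j : ℕ) → y i ≤ y j := by
    intro i j hij
    obtain ⟨k, hjk, hk⟩ := hy_eq j
    have hik : i ≤ k := by
      have := hjk
      rw [Fin.le_def] at this ⊢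
      omega
    have h1 := hy_le i k hik
    -- arithmetic
    have hkj : (j : ℕ) ≤ (k : ℕ) := hjk
    set d : ℕ := (k : ℕ) - (i : ℕ) with hd
    have hd1 : 1 ≤ d := by omega
    have e1 : (k : ℕ) - (i : ℕ) + 1 = d + 1 := by omega
    have e2 : (k : ℕ) - (j : ℕ) + 1 = d := by omega
    rw [e1] at h1
    rw [e2] at hk
    have hSj : S (j : ℕ) = S (i : ℕ) + y i := by rw [← hij]; exact hSsucc i
    rw [hSj] at hk
    have hdpos : (0 : ℝ) < (d : ℝ) := by positivity
    push_cast at h1 hk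
    nlinarith [hdpos]
  have haux : ∀ (e : ℕ) (a b : Fin m), (b : ℕ) = (a : ℕ) + e → y a ≤ y b := by
    intro e
    induction e with
    | zero =>
      intro a b h
      have : a = b := Fin.ext (by omega)
      rw [this]
    | succ e ih =>
      intro a b h
      have hbm : (a : ℕ) + e < m := by omega
      have h1 : y a ≤ y ⟨(a : ℕ) + e, hbm⟩ := ih a ⟨(a : ℕ) + e, hbm⟩ rfl
      have h2 : y ⟨(a : ℕ) + e, hbm⟩ ≤ y b := hstep ⟨(a : ℕ) + e, hbm⟩ b (by simp; omega)
      exact h1.trans h2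
  have hymono : Monotone y := by
    intro a b hab
    rw [Fin.le_def] at hab
    exact haux ((b : ℕ) - (a : ℕ)) a b (by omega)
  -- identify the sorted list of seqMultiset y with ofFn y
  have hyofn : seqMultiset y = ((List.ofFn y : List ℝ) : Multiset ℝ) := by
    simp [seqMultiset, Fin.univ_def, List.ofFn_eq_map]
  have hsortY : (seqMultiset y).sort (· ≤ ·) = List.ofFn y := by
    refine List.Perm.eq_of_pairwise' (Multiset.pairwise_sort _ _) hymono.sortedLE_ofFn.pairwise ?_
    have : ((seqMultiset y).sort (· ≤ ·) : Multiset ℝ) = ((List.ofFn y : List ℝ) : Multiset ℝ) := by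
      rw [Multiset.sort_eq, hyofn]
    exact Quotient.exact this
  have hkY : ∀ n : ℕ, kSmallestSum (seqMultiset y) n = S n := by
    intro n; rw [kSmallestSum, hsortY]
  -- the sorted list of A
  set L : List ℝ := (seqMultiset A).sort (· ≤ ·) with hLdef
  have hLsorted : L.Pairwise (· ≤ ·) := Multiset.pairwise_sort _ _
  have hLlen : L.length = m := by
    rw [hLdef, Multiset.length_sort]
    simp [seqMultiset]
  set P : ℕ → ℝ := fun n => (L.take n).sum with hPdef
  have hkA : ∀ n : ℕ, kSmallestSum (seqMultiset A) n = P n := fun n => rfl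
  have hPsucc : ∀ n : ℕ, n < m → ∀ (h : n < L.length), P (n + 1) = P n + L[n] := by
    intro n hn h
    rw [hPdef]
    exact List.sum_take_succ _ _ h
  have hPA : ∀ i : Fin m, P ((i : ℕ) + 1) ≤ T i := by
    intro i; rw [← hkA]; exact hA i
  -- sorted entries of L
  have hLmono : ∀ c d : ℕ, c ≤ d → ∀ (hc : c < L.length) (hd : d < L.length), L[c] ≤ L[d] := by
    intro c d hcd hc hd
    have := hLsorted.rel_get_of_le (a := ⟨c, hc⟩) (b := ⟨d, hd⟩) hcd
    simpa using this
  -- growth lemma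
  have hgrow : ∀ (c : ℕ) (hc : c < L.length) (d : ℕ), c ≤ d → d ≤ m →
      P c + ((d - c : ℕ) : ℝ) * L[c] ≤ P d := by
    intro c hc d
    induction d with
    | zero =>
      intro h1 _
      have hc0 : c = 0 := by omega
      subst hc0
      simp
    | succ d ih =>
      intro h1 h2
      rcases Nat.lt_or_ge c (d + 1) with hlt | hge
      · have hcd : c ≤ d := by omega
        have hdm : d < m := by omega
        have hdL : d < L.length := by omega
        have hP := hPsucc d hdm hdL
        have hLe : L[c] ≤ L[d] := hLmono c d hcd hc hdL
        have hih := ih hcd (by omega)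
        have e : ((d + 1 - c : ℕ) : ℝ) = ((d - c : ℕ) : ℝ) + 1 := by
          have hh : d + 1 - c = (d - c) + 1 := by omega
          rw [hh]; push_cast; ring
        rw [hP, e]
        linarith
      · have : c = d + 1 := by omega
        subst this; simp
  -- main induction: P n ≤ S n for n ≤ m
  have main : ∀ n : ℕ, n ≤ m → P n ≤ S n := by
    intro n
    induction n with
    | zero => intro _; simp [hPdef, hSdef]
    | succ i ih =>
      intro h
      have him : i < m := h
      have hiL : i < L.length := by omega
      set I : Fin m := ⟨i, him⟩ with hI
      have hPs := hPsucc i him hiL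
      have hSs : S (i + 1) = S i + y I := hSsucc I
      rcases le_or_gt (L[i]) (y I) with hcase | hcase
      · have h0 := ih (le_of_lt him)
        rw [hPs, hSs]
        linarith
      · obtain ⟨k, hIk, hk⟩ := hy_eq I
        have hik : i ≤ (k : ℕ) := hIk
        have h1 : P i + (((k : ℕ) + 1 - i : ℕ) : ℝ) * L[i] ≤ P ((k : ℕ) + 1) :=
          hgrow i hiL ((k : ℕ) + 1) (by omega) (by omega)
        have h2 : P ((k : ℕ) + 1) ≤ T k := hPA k
        -- hk : S i + ((k - i + 1 : ℕ) : ℝ) * y I = T k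
        have e1 : ((k : ℕ) + 1 - i : ℕ) = (k : ℕ) - i + 1 := by omega
        rw [e1] at h1
        set c : ℕ := (k : ℕ) - i + 1 with hc
        have hc1 : 1 ≤ c := by omega
        have hcR : (1 : ℝ) ≤ (c : ℝ) := by exact_mod_cast hc1
        rw [hPs, hSs]
        nlinarith [h1, h2, hk, hcase, hcR]
  -- conclude
  intro n
  rw [hkY, hkA]
  rcases le_or_gt n m with h | h
  · exact main n h
  · have hPn : P n = P m := by
      have h1 : L.take n = L := List.take_of_length_le (by omega)
      have h2 : L.take m = L := List.take_of_length_le (by omega)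
      show (L.take n).sum = (L.take m).sum
      rw [h1, h2]
    have hSn : S n = S m := by
      simp only [hSdef]
      have hl : (List.ofFn y).length = m := by simp
      have h1 : (List.ofFn y).take n = List.ofFn y := List.take_of_length_le (by omega)
      have h2 : (List.ofFn y).take m = List.ofFn y := List.take_of_length_le (by omega)
      rw [h1, h2]
    rw [hPn, hSn]
    exact main m le_rfl
end

section
/- Let p_1,…,p_n be n points on the unit circle S¹ and let φ(x,y) ∈ [0,π] denote the angular (geodesic) distance. For every k with 1 ≤ k ≤ ⌊n/2⌋, if the points are labeled in cyclic order and indices are taken mod n, then Σ_{i=1}^{n} φ(p_i, p_{i+k}) ≤ 2πk. -/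
lemma abs_exp_sub_exp (a b : ℝ) :
    ‖Complex.exp (a * Complex.I) - Complex.exp (b * Complex.I)‖
      = 2 * |Real.sin ((b - a) / 2)| := by
  have h2 : ∀ d : ℂ, (2:ℂ) * Complex.sin d * Complex.I
      = Complex.exp (d * Complex.I) - Complex.exp (-d * Complex.I) := by
    intro d
    rw [Complex.sin]
    linear_combination (Complex.exp (-d * Complex.I) - Complex.exp (d * Complex.I)) * Complex.I_sq
  have key : Complex.exp (a * Complex.I) - Complex.exp (b * Complex.I)
      = Complex.exp ((((a + b) / 2 : ℝ)) * Complex.I) *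
        ((2:ℂ) * Complex.sin (((a - b) / 2 : ℝ)) * Complex.I) := by
    rw [h2, mul_sub, ← Complex.exp_add, ← Complex.exp_add]
    push_cast
    ring_nf
  rw [key, norm_mul, Complex.norm_exp_ofReal_mul_I, one_mul, norm_mul, norm_mul,
    Complex.norm_I, mul_one, Complex.norm_two, ← Complex.ofReal_sin, Complex.norm_real, Real.norm_eq_abs]
  rw [show (b - a) / 2 = -((a - b)/2) by ring, Real.sin_neg, abs_neg]

lemma arcsin_sin_le {t : ℝ} (ht : 0 ≤ t) : Real.arcsin (Real.sin t) ≤ t := by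
  rcases le_or_gt t (Real.pi / 2) with h | h
  · rw [Real.arcsin_sin (by linarith) h]
  · exact (Real.arcsin_le_pi_div_two _).trans h.le

/-- Both bounds for the geodesic distance between `exp(aI)` and `exp(bI)` with `a ≤ b`,
`b - a ≤ 2π`. -/
lemma phi_bounds {a b : ℝ} (hab : a ≤ b) (h2 : b - a ≤ 2 * Real.pi) :
    2 * Real.arcsin (‖Complex.exp (a * Complex.I)
        - Complex.exp (b * Complex.I)‖ / 2) ≤ b - a ∧
    2 * Real.arcsin (‖Complex.exp (a * Complex.I)
        - Complex.exp (b * Complex.I)‖ / 2) ≤ 2 * Real.pi - (b - a) := by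
  set t := (b - a) / 2 with ht
  have ht0 : 0 ≤ t := by rw [ht]; linarith
  have htpi : t ≤ Real.pi := by rw [ht]; linarith
  have habs : ‖Complex.exp (a * Complex.I) - Complex.exp (b * Complex.I)‖ / 2
      = Real.sin t := by
    rw [abs_exp_sub_exp, ← ht, abs_of_nonneg (Real.sin_nonneg_of_nonneg_of_le_pi ht0 htpi)]
    ring
  rw [habs]
  constructor
  · have := arcsin_sin_le ht0
    linarith
  · have hs : Real.sin t = Real.sin (Real.pi - t) := (Real.sin_pi_sub t).symm
    rw [hs]
    have := arcsin_sin_le (by linarith : (0:ℝ) ≤ Real.pi - t)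
    linarith

/-- For n points in cyclic order on the unit circle and 1 ≤ k ≤ ⌊n/2⌋, the sum of
geodesic distances Σᵢ φ(pᵢ, pᵢ₊ₖ) is at most 2πk. -/
theorem sum_angular_dist_le {n : ℕ} [NeZero n] (θ : Fin n → ℝ) (hmono : Monotone θ)
    (hθ : ∀ i, θ i ∈ Set.Ico 0 (2 * Real.pi))
    (p : Fin n → ℂ) (hp : ∀ i, p i = Complex.exp (θ i * Complex.I))
    (k : ℕ) (hk1 : 1 ≤ k) (hk2 : k ≤ n / 2) :
    ∑ i : Fin n, 2 * Real.arcsin (‖p i - p (i + Fin.ofNat n k)‖ / 2) ≤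
      2 * Real.pi * k := by
  have hn2 : 2 ≤ n := by omega
  have hkn : k < n := by omega
  have hval : ∀ i : Fin n, (i + Fin.ofNat n k).val = (i.val + k) % n := by
    intro i
    rw [Fin.add_def]
    rw [Fin.val_ofNat, Nat.mod_eq_of_lt hkn]
  -- pointwise bound
  have hbound : ∀ i : Fin n,
      2 * Real.arcsin (‖p i - p (i + Fin.ofNat n k)‖ / 2)
        ≤ θ (i + Fin.ofNat n k) - θ i + (if n ≤ i.val + k then 2 * Real.pi else 0) := by
    intro i
    set j := i + Fin.ofNat n k with hj
    rcases lt_or_ge (i.val + k) n with hc | hc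
    · -- no wrap
      have hjv : j.val = i.val + k := by rw [hj, hval, Nat.mod_eq_of_lt hc]
      have hle : θ i ≤ θ j := hmono (by simp [Fin.le_def, hjv])
      have hd : θ j - θ i ≤ 2 * Real.pi := by
        have h1 := (hθ i).1; have h2 := (hθ j).2; linarith
      rw [hp, hp]
      have := (phi_bounds hle hd).1
      rw [if_neg (by omega)]
      linarith
    · -- wrap
      have hjv : j.val = i.val + k - n := by
        rw [hj, hval, Nat.mod_eq_sub_mod hc, Nat.mod_eq_of_lt (by have := i.isLt; omega)]
      have hle : θ j ≤ θ i := hmono (by rw [Fin.le_def, hjv]; omega)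
      have hd : θ i - θ j ≤ 2 * Real.pi := by
        have h1 := (hθ j).1; have h2 := (hθ i).2; linarith
      rw [hp, hp]
      have h := (phi_bounds hle hd).2
      rw [norm_sub_rev] at h
      rw [if_pos hc]
      linarith
  calc ∑ i : Fin n, 2 * Real.arcsin (‖p i - p (i + Fin.ofNat n k)‖ / 2)
      ≤ ∑ i : Fin n, (θ (i + Fin.ofNat n k) - θ i + (if n ≤ i.val + k then 2 * Real.pi else 0)) :=
        Finset.sum_le_sum fun i _ => hbound i
    _ = 2 * Real.pi * k := by
        rw [Finset.sum_add_distrib, Finset.sum_sub_distrib]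
        have hperm : ∑ i : Fin n, θ (i + Fin.ofNat n k) = ∑ i : Fin n, θ i :=
          Fintype.sum_equiv (Equiv.addRight (Fin.ofNat n k)) _ _ (fun i => rfl)
        rw [hperm, sub_self, zero_add]
        have : ∑ i : Fin n, (if n ≤ i.val + k then (2 * Real.pi) else 0)
            = ∑ m ∈ Finset.range n, (if n ≤ m + k then (2 * Real.pi) else 0) := by
          rw [Fin.sum_univ_eq_sum_range (fun m => if n ≤ m + k then (2 * Real.pi) else 0)]
        rw [this]
        rw [Finset.range_eq_Ico, ← Finset.sum_Ico_consecutive _ (Nat.zero_le (n - k)) (by omega : n - k ≤ n)]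
        rw [Finset.sum_ite_of_false (by intro m hm; simp only [Finset.mem_Ico] at hm; omega),
          Finset.sum_ite_of_true (by intro m hm; simp only [Finset.mem_Ico] at hm; omega)]
        simp [Nat.sub_sub_self hkn.le]
        ring
end

section
/- Let f(t) = Σ_{k=0}^{d} f_k G_k^{(n)}(t) with all f_k ≥ 0 and suppose f(t) ≤ 0 for all t ∈ T ⊆ [−1,1). Then for every finite set P = {p_1,…,p_m} of unit vectors in ℝ^n with ⟨p_i,p_j⟩ ∈ T for all i ≠ j, one has m·f_0 ≤ f(1). (Delsarte's linear programming bound.) -/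
open scoped RealInnerProductSpace

/-- Gegenbauer polynomials for dimension `n`, normalized so that `Geg n k 1 = 1`. -/
noncomputable def Geg (n : ℕ) : ℕ → ℝ → ℝ
  | 0 => fun _ => 1
  | 1 => fun t => t
  | (k + 2) => fun t =>
      ((2 * ((k : ℝ) + 2) + (n : ℝ) - 4) * t * Geg n (k + 1) t -
          (((k : ℝ) + 2) - 1) * Geg n k t) / (((k : ℝ) + 2) + (n : ℝ) - 3)

namespace Delsarte


noncomputable def nu (n k : ℕ) : ℕ → ℝ
  | 0 => 1
  | (j+1) => nu n k j * (-(((k:ℝ)-2*j)*((k:ℝ)-2*j-1))) / (2*((j:ℝ)+1)*(2*k-2*j-4+n))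

noncomputable def Dp (k r : ℕ) : ℝ := ∏ i ∈ Finset.range r, ((k:ℝ) - i)

noncomputable def Rp (n k j : ℕ) : ℝ := ∏ i ∈ Finset.range j, (2*(k:ℝ) + n - 4 - 2*i)

lemma nu_eq_zero {n k : ℕ} : ∀ j, k + 1 ≤ 2*j → nu n k j = 0 := by
  intro j
  induction j with
  | zero => omega
  | succ j ih =>
    intro hj
    by_cases h : k + 1 ≤ 2*j
    · simp [nu, ih h]
    · have hk : k = 2*j ∨ k = 2*j+1 := by omega
      have : ((k:ℝ)-2*j)*((k:ℝ)-2*j-1) = 0 := by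
        rcases hk with h | h <;> subst h <;> push_cast <;> ring
      simp [nu, this]

lemma Rp_pos {n k j : ℕ} (hn : 2 ≤ n) (hj : 2*j ≤ k) : 0 < Rp n k j := by
  apply Finset.prod_pos
  intro i hi
  simp only [Finset.mem_range] at hi
  have h2 : (2:ℝ) ≤ n := by exact_mod_cast hn
  have hik : (i:ℝ) + 1 ≤ j := by exact_mod_cast hi
  have hjk : 2*(j:ℝ) ≤ k := by exact_mod_cast hj
  linarith

lemma nu_closed {n k : ℕ} (hn : 2 ≤ n) : ∀ j, 2*j ≤ k →
    nu n k j = (-1)^j * Dp k (2*j) / (2^j * (Nat.factorial j : ℝ) * Rp n k j) := by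
  intro j
  induction j with
  | zero => simp [nu, Dp, Rp]
  | succ j ih =>
    intro hj
    have hj' : 2*j ≤ k := by omega
    have hrec : nu n k (j+1) = nu n k j * (-(((k:ℝ)-2*j)*((k:ℝ)-2*j-1))) / (2*((j:ℝ)+1)*(2*k-2*j-4+n)) := rfl
    rw [hrec, ih hj']
    have hD : Dp k (2*(j+1)) = Dp k (2*j) * ((k:ℝ)-2*j) * ((k:ℝ)-2*j-1) := by
      have h2 : 2*(j+1) = (2*j)+1+1 := by ring
      rw [h2]
      simp only [Dp, Finset.prod_range_succ]
      push_cast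
      ring
    have hR : Rp n k (j+1) = Rp n k j * (2*(k:ℝ) + n - 4 - 2*j) := by
      simp [Rp, Finset.prod_range_succ]
    have hfac : ((Nat.factorial (j+1)) : ℝ) = ((j:ℝ)+1) * (Nat.factorial j : ℝ) := by
      push_cast [Nat.factorial_succ]; ring
    rw [hD, hR, hfac]
    have hRne : Rp n k j ≠ 0 := ne_of_gt (Rp_pos hn hj')
    have hden : (2*(k:ℝ) + n - 4 - 2*j) ≠ 0 := by
      have h2 : (2:ℝ) ≤ n := by exact_mod_cast hn
      have hjk : 2*((j:ℝ)+1) ≤ k := by exact_mod_cast hj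
      nlinarith
    have hfne : (Nat.factorial j : ℝ) ≠ 0 := by positivity
    have h2j : (2:ℝ)^j ≠ 0 := by positivity
    have hj1 : ((j:ℝ)+1) ≠ 0 := by positivity
    have hsame : (2*(k:ℝ)-2*(j:ℝ)-4+(n:ℝ)) = (2*(k:ℝ) + n - 4 - 2*j) := by ring
    rw [hsame]
    rw [pow_succ]
    field_simp
    ring

lemma nu_closed' {n k : ℕ} (hn : 2 ≤ n) (j : ℕ) (hj : 2*j ≤ k+1) :
    nu n k j = (-1)^j * Dp k (2*j) / (2^j * (Nat.factorial j : ℝ) * Rp n k j) := by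
  rcases Nat.lt_or_ge (2*j) (k+1) with h | h
  · exact nu_closed hn j (by omega)
  · have h0 : nu n k j = 0 := nu_eq_zero j (by omega)
    have hD : Dp k (2*j) = 0 := by
      apply Finset.prod_eq_zero (i := k)
      · simp only [Finset.mem_range]; omega
      · simp
    rw [h0, hD]
    simp

lemma Dp_succ (k r : ℕ) : Dp k (r+1) = Dp k r * ((k:ℝ) - r) := by
  simp [Dp, Finset.prod_range_succ]

lemma Dp_succ_left (k r : ℕ) : Dp (k+1) (r+1) = ((k:ℝ)+1) * Dp k r := by
  unfold Dp
  rw [Finset.prod_range_succ']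
  have h1 : ∀ i ∈ Finset.range r, (((k+1:ℕ)):ℝ) - ((i+1:ℕ):ℝ) = (k:ℝ) - i := by
    intro i _; push_cast; ring
  rw [Finset.prod_congr rfl h1]
  push_cast
  ring

lemma Rp_succ_left (n k j : ℕ) : Rp n (k+1) (j+1) = (2*(k:ℝ)+n-2) * Rp n k j := by
  unfold Rp
  rw [Finset.prod_range_succ']
  have h1 : ∀ i ∈ Finset.range j,
      2*(((k+1:ℕ)):ℝ) + n - 4 - 2*((i+1:ℕ):ℝ) = 2*(k:ℝ) + n - 4 - 2*(i:ℝ) := by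
    intro i _; push_cast; ring
  rw [Finset.prod_congr rfl h1]
  push_cast
  ring

lemma Rp_succ (n k j : ℕ) : Rp n k (j+1) = Rp n k j * (2*(k:ℝ)+n-4-2*j) := by
  simp [Rp, Finset.prod_range_succ]

lemma Rp_telescope (n k : ℕ) : ∀ j, Rp n (k+1) j * (2*(k:ℝ)+n-2-2*j) = (2*(k:ℝ)+n-2) * Rp n k j := by
  intro j
  induction j with
  | zero => simp [Rp]
  | succ j ih =>
    have h1 : Rp n (k+1) (j+1) = Rp n (k+1) j * (2*(k:ℝ)+n-2-2*j) := by
      rw [Rp_succ]; push_cast; ring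
    rw [h1, Rp_succ]
    push_cast
    nlinarith [ih]

/-- The key coefficient identity -/
lemma coeff_identity {n k : ℕ} (hn : 2 ≤ n) (hk : 1 ≤ k) (jj : ℕ) (hj : 2*jj ≤ k) :
    nu n (k+2) (jj+1) = nu n (k+1) (jj+1)
      - (((k:ℝ)+1)*((k:ℝ)+n-2)/((2*k+n)*((2:ℝ)*k+n-2))) * nu n k jj := by
  have h2n : (2:ℝ) ≤ n := by exact_mod_cast hn
  have h1k : (1:ℝ) ≤ k := by exact_mod_cast hk
  have e1 : nu n (k+2) (jj+1) = (-1)^(jj+1) * Dp (k+2) (2*(jj+1)) /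
      (2^(jj+1) * (Nat.factorial (jj+1) : ℝ) * Rp n (k+2) (jj+1)) :=
    nu_closed' hn (jj+1) (by omega)
  have e2 : nu n (k+1) (jj+1) = (-1)^(jj+1) * Dp (k+1) (2*(jj+1)) /
      (2^(jj+1) * (Nat.factorial (jj+1) : ℝ) * Rp n (k+1) (jj+1)) :=
    nu_closed' hn (jj+1) (by omega)
  have e3 : nu n k jj = (-1)^jj * Dp k (2*jj) /
      (2^jj * (Nat.factorial jj : ℝ) * Rp n k jj) :=
    nu_closed' hn jj (by omega)
  have hD2 : Dp (k+2) (2*(jj+1)) = ((k:ℝ)+2)*((k:ℝ)+1) * Dp k (2*jj) := by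
    have h : 2*(jj+1) = (2*jj+1)+1 := by ring
    rw [h, show k+2 = (k+1)+1 from rfl, Dp_succ_left, show 2*jj+1 = (2*jj)+1 from rfl,
      Dp_succ_left]
    push_cast; ring
  have hD1 : Dp (k+1) (2*(jj+1)) = ((k:ℝ)+1)*((k:ℝ)-2*jj) * Dp k (2*jj) := by
    have h : 2*(jj+1) = (2*jj)+1+1 := by ring
    rw [h, Dp_succ_left, Dp_succ]
    push_cast; ring
  have hR2 : Rp n (k+2) (jj+1) = (2*(k:ℝ)+n) * Rp n (k+1) jj := by
    rw [show k+2 = (k+1)+1 from rfl, Rp_succ_left]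
    push_cast; ring
  have hR1 : Rp n (k+1) (jj+1) = (2*(k:ℝ)+n-2) * Rp n k jj := Rp_succ_left n k jj
  have htel : Rp n (k+1) jj * (2*(k:ℝ)+n-2-2*jj) = (2*(k:ℝ)+n-2) * Rp n k jj :=
    Rp_telescope n k jj
  have hRk : (0:ℝ) < Rp n k jj := Rp_pos hn hj
  have hd1 : (0:ℝ) < 2*(k:ℝ)+n := by linarith
  have hd2 : (0:ℝ) < 2*(k:ℝ)+n-2 := by linarith
  have hd3 : (0:ℝ) < 2*(k:ℝ)+n-2-2*jj := by
    have : 2*(jj:ℝ) ≤ (k:ℝ) := by exact_mod_cast hj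
    linarith
  have hRk1 : Rp n (k+1) jj = (2*(k:ℝ)+n-2) * Rp n k jj / (2*(k:ℝ)+n-2-2*jj) := by
    rw [eq_div_iff (ne_of_gt hd3)]
    linarith [htel]
  have hfacs : ((Nat.factorial (jj+1)) : ℝ) = ((jj:ℝ)+1) * (Nat.factorial jj : ℝ) := by
    push_cast [Nat.factorial_succ]; ring
  have hfne : (0:ℝ) < (Nat.factorial jj : ℝ) := by positivity
  have hjj1 : (0:ℝ) < (jj:ℝ)+1 := by positivity
  have h2p : (0:ℝ) < (2:ℝ)^jj := by positivity
  rw [e1, e2, e3, hD2, hD1, hR2, hR1, hRk1, hfacs]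
  rw [pow_succ (-1:ℝ), pow_succ (2:ℝ)]
  have hne1 := ne_of_gt hd1
  have hne2 := ne_of_gt hd2
  have hne3 := ne_of_gt hd3
  have hneR := ne_of_gt hRk
  have hneF := ne_of_gt hfne
  have hneJ := ne_of_gt hjj1
  have hne2p := ne_of_gt h2p
  field_simp
  ring


noncomputable def P (n k : ℕ) (t : ℝ) : ℝ := ∑ j ∈ Finset.range (k+1), nu n k j * t^(k-2*j)

noncomputable def lam (n : ℕ) : ℕ → ℝ
  | 0 => 1
  | 1 => 1
  | (k+2) => lam n (k+1) * ((k:ℝ)+n-1)/(2*k+n)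

noncomputable def bcoef (n k : ℕ) : ℝ := ((k:ℝ)+1) * lam n (k+1) / ((2*k+n) * lam n k)

lemma lam_pos {n : ℕ} (hn : 2 ≤ n) : ∀ k, 0 < lam n k := by
  intro k
  induction k using Nat.strong_induction_on with
  | _ k ih =>
    match k with
    | 0 => norm_num [lam]
    | 1 => norm_num [lam]
    | (k+2) =>
      have h1 : 0 < lam n (k+1) := ih (k+1) (by omega)
      have h2 : (0:ℝ) < (k:ℝ)+n-1 := by
        have : (2:ℝ) ≤ n := by exact_mod_cast hn
        nlinarith [Nat.cast_nonneg (α := ℝ) k]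
      have h3 : (0:ℝ) < 2*(k:ℝ)+n := by
        have : (2:ℝ) ≤ n := by exact_mod_cast hn
        nlinarith [Nat.cast_nonneg (α := ℝ) k]
      show 0 < lam n (k+1) * ((k:ℝ)+n-1)/(2*k+n)
      positivity

lemma bcoef_closed {n k : ℕ} (hn : 2 ≤ n) (hk : 1 ≤ k) :
    bcoef n k = ((k:ℝ)+1)*((k:ℝ)+n-2)/((2*k+n)*((2:ℝ)*k+n-2)) := by
  have h2n : (2:ℝ) ≤ n := by exact_mod_cast hn
  have h1k : (1:ℝ) ≤ k := by exact_mod_cast hk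
  obtain ⟨k', rfl⟩ : ∃ k', k = k'+1 := ⟨k-1, by omega⟩
  have hlam : lam n (k'+2) = lam n (k'+1) * ((k':ℝ)+n-1)/(2*k'+n) := rfl
  unfold bcoef
  rw [hlam]
  have hpos : 0 < lam n (k'+1) := lam_pos hn (k'+1)
  have h1 : (0:ℝ) < 2*(k':ℝ)+n := by nlinarith [Nat.cast_nonneg (α := ℝ) k']
  have h2 : (0:ℝ) < 2*((k':ℝ)+1)+n := by nlinarith [Nat.cast_nonneg (α := ℝ) k']
  have h3 : (0:ℝ) < (k':ℝ)+n-1 := by nlinarith [Nat.cast_nonneg (α := ℝ) k']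
  push_cast
  rw [div_eq_div_iff (by positivity) (by nlinarith)]
  field_simp
  ring

lemma nu_zero (n k : ℕ) : nu n k 0 = 1 := rfl

lemma nu_succ (n k j : ℕ) : nu n k (j+1) =
    nu n k j * (-(((k:ℝ)-2*j)*((k:ℝ)-2*j-1))) / (2*((j:ℝ)+1)*(2*(k:ℝ)-2*(j:ℝ)-4+(n:ℝ))) := rfl

lemma P_rec {n : ℕ} (hn : 2 ≤ n) (k : ℕ) (t : ℝ) :
    P n (k+2) t = t * P n (k+1) t - bcoef n k * P n k t := by
  have hn0 : (n:ℝ) ≠ 0 := by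
    have : (2:ℝ) ≤ n := by exact_mod_cast hn
    linarith
  rcases Nat.eq_zero_or_pos k with rfl | hk
  · -- k = 0 : direct computation
    have h22 : nu n 2 2 = 0 := nu_eq_zero 2 (by omega)
    have h11 : nu n 1 1 = 0 := by rw [nu_succ]; norm_num
    have h21 : nu n 2 1 = -(1/(n:ℝ)) := by
      rw [nu_succ, nu_zero]
      push_cast
      field_simp
      ring
    have hb : bcoef n 0 = 1/(n:ℝ) := by
      unfold bcoef
      have : lam n 1 = 1 := rfl
      have h0 : lam n 0 = 1 := rfl
      rw [this, h0]
      push_cast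
      field_simp
      ring
    unfold P
    simp only [Finset.sum_range_succ, Finset.sum_range_zero]
    rw [h22, h21, h11, nu_zero, nu_zero, nu_zero, hb]
    norm_num
    ring
  · -- k ≥ 1
    have hb := bcoef_closed hn hk
    have h2 : P n (k+2) t = t^(k+2) + ∑ j ∈ Finset.range (k+2), nu n (k+2) (j+1) * t^(k-2*j) := by
      unfold P
      rw [Finset.sum_range_succ']
      rw [nu_zero]
      have he : ∀ j ∈ Finset.range (k+2),
          nu n (k+2) (j+1) * t^(k+2-2*(j+1)) = nu n (k+2) (j+1) * t^(k-2*j) := by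
        intro j _
        congr 2
        omega
      rw [Finset.sum_congr rfl he]
      rw [show k+2-2*0 = k+2 by omega]
      ring
    have h3 : t * P n (k+1) t = t^(k+2) +
        ∑ j ∈ Finset.range (k+2), nu n (k+1) (j+1) * (t * t^(k+1-2*(j+1))) := by
      unfold P
      rw [Finset.mul_sum, Finset.sum_range_succ']
      rw [nu_zero]
      have hpad : ∑ j ∈ Finset.range (k+2), nu n (k+1) (j+1) * (t * t^(k+1-2*(j+1)))
          = ∑ j ∈ Finset.range (k+1), nu n (k+1) (j+1) * (t * t^(k+1-2*(j+1))) := by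
        rw [Finset.sum_range_succ]
        rw [nu_eq_zero (k+1+1) (by omega)]
        ring
      rw [hpad]
      have he : ∀ j ∈ Finset.range (k+1),
          t * (nu n (k+1) (j+1) * t^(k+1-2*(j+1))) = nu n (k+1) (j+1) * (t * t^(k+1-2*(j+1))) := by
        intro j _; ring
      rw [Finset.sum_congr rfl he]
      rw [show k+1-2*0 = k+1 by omega, show k+2 = (k+1)+1 from rfl, pow_succ]
      ring
    have h4 : bcoef n k * P n k t = ∑ j ∈ Finset.range (k+2), bcoef n k * (nu n k j * t^(k-2*j)) := by
      unfold P
      rw [Finset.mul_sum]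
      symm
      rw [Finset.sum_range_succ]
      rw [nu_eq_zero (k+1) (by omega)]
      ring
    have he : ∀ j ∈ Finset.range (k+2),
        nu n (k+2) (j+1) * t^(k-2*j)
          = nu n (k+1) (j+1) * (t * t^(k+1-2*(j+1))) - bcoef n k * (nu n k j * t^(k-2*j)) := by
      intro j _
      rcases show 2*j+1 ≤ k ∨ 2*j = k ∨ k+1 ≤ 2*j by omega with hc | hc | hc
      · have hexp : k - 2*j = (k+1-2*(j+1)) + 1 := by omega
        have hpow : t * t^(k+1-2*(j+1)) = t^(k-2*j) := by
          rw [hexp, pow_succ]; ring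
        rw [hpow, coeff_identity hn hk j (by omega), hb]
        ring
      · have hz : nu n (k+1) (j+1) = 0 := nu_eq_zero (j+1) (by omega)
        rw [hz, coeff_identity hn hk j (by omega), hz, hb]
        ring
      · have z1 : nu n (k+1) (j+1) = 0 := nu_eq_zero (j+1) (by omega)
        have z2 : nu n k j = 0 := nu_eq_zero j (by omega)
        have z3 : nu n (k+2) (j+1) = 0 := nu_eq_zero (j+1) (by omega)
        rw [z1, z2, z3]
        ring
    rw [h2, h3, h4, Finset.sum_congr rfl he, Finset.sum_sub_distrib]
    ring

lemma P_eq_geg {n : ℕ} (hn : 2 ≤ n) : ∀ k (t : ℝ), P n k t = lam n k * Geg n k t := by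
  intro k
  induction k using Nat.strong_induction_on with
  | _ k ih =>
    match k with
    | 0 =>
      intro t
      have h1 : Geg n 0 t = 1 := rfl
      have h2 : lam n 0 = 1 := rfl
      unfold P
      simp [h1, h2, nu_zero]
    | 1 =>
      intro t
      have h1 : Geg n 1 t = t := rfl
      have h2 : lam n 1 = 1 := rfl
      have h11 : nu n 1 1 = 0 := by rw [nu_succ]; norm_num
      unfold P
      simp [Finset.sum_range_succ, h1, h2, nu_zero, h11]
    | (k+2) =>
      intro t
      have hG : Geg n (k+2) t =
          ((2 * ((k : ℝ) + 2) + (n : ℝ) - 4) * t * Geg n (k + 1) t -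
            (((k : ℝ) + 2) - 1) * Geg n k t) / (((k : ℝ) + 2) + (n : ℝ) - 3) := rfl
      have hlam : lam n (k+2) = lam n (k+1) * ((k:ℝ)+n-1)/(2*(k:ℝ)+n) := by
        show lam n (k+1) * ((k:ℝ)+n-1)/(2*k+n) = _
        norm_num
      have h2n : (2:ℝ) ≤ n := by exact_mod_cast hn
      have hk0 : (0:ℝ) ≤ k := Nat.cast_nonneg k
      have hd1 : ((k:ℝ)+n-1) ≠ 0 := by nlinarith
      have hd2 : (2*(k:ℝ)+n) ≠ 0 := by nlinarith
      have hlamk : 0 < lam n k := lam_pos hn k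
      rw [P_rec hn k t, ih (k+1) (by omega) t, ih k (by omega) t, hG, hlam]
      unfold bcoef
      have heq : ((k:ℝ)+2) + (n:ℝ) - 3 = (k:ℝ)+n-1 := by ring
      rw [heq]
      field_simp
      ring

open MvPolynomial
open MvPolynomial

variable {n : ℕ}

/-- factorial weight -/
noncomputable def w (α : Fin n →₀ ℕ) : ℝ := ∏ i : Fin n, (Nat.factorial (α i) : ℝ)

lemma w_pos (α : Fin n →₀ ℕ) : 0 < w α := by
  apply Finset.prod_pos; intro i _; positivity

/-- Fischer-type bilinear form -/
noncomputable def B (p q : MvPolynomial (Fin n) ℝ) : ℝ :=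
  ∑ α ∈ p.support, w α * p.coeff α * q.coeff α

lemma B_eq_sum {p q : MvPolynomial (Fin n) ℝ} {S : Finset (Fin n →₀ ℕ)}
    (hS : p.support ⊆ S) : B p q = ∑ α ∈ S, w α * p.coeff α * q.coeff α := by
  apply Finset.sum_subset hS
  intro α _ hα
  rw [MvPolynomial.notMem_support_iff.mp hα]
  ring

lemma B_symm (p q : MvPolynomial (Fin n) ℝ) : B p q = B q p := by
  rw [B_eq_sum (S := p.support ∪ q.support) Finset.subset_union_left,
    B_eq_sum (p := q) (q := p) (S := p.support ∪ q.support) Finset.subset_union_right]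
  exact Finset.sum_congr rfl fun α _ => by ring

lemma B_zero_left (q : MvPolynomial (Fin n) ℝ) : B 0 q = 0 := by
  simp [B]

lemma B_add_left (p p' q : MvPolynomial (Fin n) ℝ) : B (p + p') q = B p q + B p' q := by
  classical
  have h1 : B (p+p') q = ∑ α ∈ p.support ∪ p'.support ∪ (p+p').support,
      w α * (p+p').coeff α * q.coeff α :=
    B_eq_sum (by intro a ha; exact Finset.mem_union_right _ ha)
  have h2 : B p q = ∑ α ∈ p.support ∪ p'.support ∪ (p+p').support, w α * p.coeff α * q.coeff α :=
    B_eq_sum (by intro a ha; exact Finset.mem_union_left _ (Finset.mem_union_left _ ha))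
  have h3 : B p' q = ∑ α ∈ p.support ∪ p'.support ∪ (p+p').support, w α * p'.coeff α * q.coeff α :=
    B_eq_sum (by intro a ha; exact Finset.mem_union_left _ (Finset.mem_union_right _ ha))
  rw [h1, h2, h3, ← Finset.sum_add_distrib]
  apply Finset.sum_congr rfl
  intro α _
  rw [MvPolynomial.coeff_add]
  ring

lemma B_add_right (p q q' : MvPolynomial (Fin n) ℝ) : B p (q + q') = B p q + B p q' := by
  rw [B_symm, B_add_left, B_symm q p, B_symm q' p]

lemma B_smul_left (a : ℝ) (p q : MvPolynomial (Fin n) ℝ) : B (a • p) q = a * B p q := by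
  have h1 : B (a • p) q = ∑ α ∈ p.support, w α * (a • p).coeff α * q.coeff α :=
    B_eq_sum (MvPolynomial.support_smul)
  rw [h1, B, Finset.mul_sum]
  apply Finset.sum_congr rfl
  intro α _
  rw [MvPolynomial.coeff_smul]
  simp [smul_eq_mul]
  ring

lemma B_Cmul_left (a : ℝ) (p q : MvPolynomial (Fin n) ℝ) : B (C a * p) q = a * B p q := by
  rw [← MvPolynomial.smul_eq_C_mul, B_smul_left]

lemma B_Cmul_right (a : ℝ) (p q : MvPolynomial (Fin n) ℝ) : B p (C a * q) = a * B p q := by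
  rw [B_symm, B_Cmul_left, B_symm]

lemma B_sum_left {ι : Type*} (s : Finset ι) (f : ι → MvPolynomial (Fin n) ℝ)
    (q : MvPolynomial (Fin n) ℝ) : B (∑ i ∈ s, f i) q = ∑ i ∈ s, B (f i) q := by
  classical
  induction s using Finset.induction_on with
  | empty => simp [B_zero_left]
  | insert _ _ h ih => rw [Finset.sum_insert h, Finset.sum_insert h, B_add_left, ih]

lemma B_sum_right {ι : Type*} (s : Finset ι) (p : MvPolynomial (Fin n) ℝ)
    (f : ι → MvPolynomial (Fin n) ℝ) : B p (∑ i ∈ s, f i) = ∑ i ∈ s, B p (f i) := by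
  rw [B_symm, B_sum_left]
  exact Finset.sum_congr rfl fun i _ => B_symm _ _

lemma B_self_nonneg (p : MvPolynomial (Fin n) ℝ) : 0 ≤ B p p := by
  apply Finset.sum_nonneg
  intro α _
  have := w_pos (n := n) α
  nlinarith [sq_nonneg (p.coeff α)]

lemma B_monomial_left (β : Fin n →₀ ℕ) (b : ℝ) (q : MvPolynomial (Fin n) ℝ) :
    B (monomial β b) q = w β * b * q.coeff β := by
  classical
  have h : B (monomial β b) q = ∑ α ∈ {β}, w α * (monomial β b).coeff α * q.coeff α :=
    B_eq_sum (MvPolynomial.support_monomial_subset)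
  rw [h, Finset.sum_singleton, MvPolynomial.coeff_monomial]
  simp

lemma w_add_single (β : Fin n →₀ ℕ) (i : Fin n) :
    w (Finsupp.single i 1 + β) = ((β i : ℝ) + 1) * w β := by
  classical
  unfold w
  rw [← Finset.prod_erase_mul _ _ (Finset.mem_univ i),
    ← Finset.prod_erase_mul _ _ (Finset.mem_univ i)]
  have h1 : ∀ j ∈ Finset.univ.erase i,
      ((Nat.factorial ((Finsupp.single i (1:ℕ) + β : Fin n →₀ ℕ) j)) : ℝ) = (Nat.factorial (β j) : ℝ) := by
    intro j hj
    have hne : j ≠ i := Finset.ne_of_mem_erase hj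
    rw [Finsupp.add_apply, Finsupp.single_apply, if_neg (Ne.symm hne)]
    norm_num
  rw [Finset.prod_congr rfl h1]
  have h2 : (Finsupp.single i (1:ℕ) + β : Fin n →₀ ℕ) i = β i + 1 := by
    rw [Finsupp.add_apply, Finsupp.single_apply, if_pos rfl]
    omega
  rw [h2, Nat.factorial_succ]
  push_cast
  ring

lemma adjoint_X_monomial (i : Fin n) (β γ : Fin n →₀ ℕ) (b c : ℝ) :
    B (X i * monomial β b) (monomial γ c) = B (monomial β b) (pderiv i (monomial γ c)) := by
  classical
  have hXm : (X i : MvPolynomial (Fin n) ℝ) * monomial β b = monomial (Finsupp.single i 1 + β) b := by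
    rw [MvPolynomial.X, MvPolynomial.monomial_mul, one_mul]
  rw [hXm, MvPolynomial.pderiv_monomial, B_monomial_left, B_monomial_left,
    MvPolynomial.coeff_monomial, MvPolynomial.coeff_monomial]
  by_cases hγ : γ i = 0
  · have hne : γ ≠ Finsupp.single i 1 + β := by
      intro h
      have : γ i = β i + 1 := by
        rw [h, Finsupp.add_apply, Finsupp.single_apply, if_pos rfl]; omega
      omega
    rw [if_neg hne, hγ]
    simp
  · by_cases heq : γ = Finsupp.single i 1 + β
    · have hβγ : γ - Finsupp.single i 1 = β := by
        rw [heq]; exact add_tsub_cancel_left _ _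
      have hγi : γ i = β i + 1 := by
        rw [heq, Finsupp.add_apply, Finsupp.single_apply, if_pos rfl]; omega
      rw [if_pos heq, if_pos hβγ, w_add_single, hγi]
      push_cast
      ring
    · have hne2 : γ - Finsupp.single i 1 ≠ β := by
        intro h
        apply heq
        rw [← h]
        have hle : Finsupp.single i 1 ≤ γ := by
          rw [Finsupp.single_le_iff]; omega
        rw [add_comm, tsub_add_cancel_of_le hle]
      rw [if_neg heq, if_neg hne2]
      simp

lemma adjoint_X (i : Fin n) (u q : MvPolynomial (Fin n) ℝ) :
    B (X i * u) q = B u (pderiv i q) := by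
  classical
  conv_lhs => rw [u.as_sum, q.as_sum]
  conv_rhs => rw [u.as_sum, q.as_sum]
  rw [Finset.mul_sum, B_sum_left, B_sum_left]
  apply Finset.sum_congr rfl
  intro β _
  rw [map_sum (pderiv i), B_sum_right, B_sum_right]
  apply Finset.sum_congr rfl
  intro γ _
  exact adjoint_X_monomial i β γ _ _

/-- linear form ⟨x, ·⟩ -/
noncomputable def Lf (x : Fin n → ℝ) : MvPolynomial (Fin n) ℝ := ∑ i, C (x i) * X i

/-- squared norm polynomial -/
noncomputable def S2 : MvPolynomial (Fin n) ℝ := ∑ i : Fin n, X i * X i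

/-- Laplacian -/
noncomputable def Δ (q : MvPolynomial (Fin n) ℝ) : MvPolynomial (Fin n) ℝ :=
  ∑ i : Fin n, pderiv i (pderiv i q)

/-- directional derivative -/
noncomputable def Dop (x : Fin n → ℝ) (q : MvPolynomial (Fin n) ℝ) : MvPolynomial (Fin n) ℝ :=
  ∑ i : Fin n, C (x i) * pderiv i q

noncomputable def ip (x y : Fin n → ℝ) : ℝ := ∑ i, x i * y i

lemma adjoint_L (x : Fin n → ℝ) (u q : MvPolynomial (Fin n) ℝ) :
    B (Lf x * u) q = B u (Dop x q) := by
  unfold Lf Dop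
  rw [Finset.sum_mul, B_sum_left, B_sum_right]
  apply Finset.sum_congr rfl
  intro i _
  rw [mul_assoc, B_Cmul_left, B_Cmul_right, adjoint_X]

lemma adjoint_S2 (u q : MvPolynomial (Fin n) ℝ) : B (S2 * u) q = B u (Δ q) := by
  unfold S2 Δ
  rw [Finset.sum_mul, B_sum_left, B_sum_right]
  apply Finset.sum_congr rfl
  intro i _
  rw [mul_assoc, adjoint_X, adjoint_X]

lemma pderiv_Lf (i : Fin n) (x : Fin n → ℝ) : pderiv i (Lf x) = C (x i) := by
  classical
  unfold Lf
  rw [map_sum]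
  rw [Finset.sum_eq_single i]
  · rw [Derivation.leibniz]
    simp
  · intro j _ hj
    rw [Derivation.leibniz]
    simp [MvPolynomial.pderiv_X, Pi.single_apply, Ne.symm hj]
  · intro h; exact absurd (Finset.mem_univ i) h

lemma pderiv_S2 (i : Fin n) : pderiv i (S2 : MvPolynomial (Fin n) ℝ) = X i + X i := by
  classical
  unfold S2
  rw [map_sum]
  rw [Finset.sum_eq_single i]
  · rw [MvPolynomial.pderiv_mul]
    simp
  · intro j _ hj
    rw [MvPolynomial.pderiv_mul]
    simp [MvPolynomial.pderiv_X, Pi.single_apply, Ne.symm hj]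
  · intro h; exact absurd (Finset.mem_univ i) h

lemma Dop_L_pow (x y : Fin n → ℝ) (m : ℕ) :
    Dop x (Lf y ^ m) = C ((m:ℝ) * ip x y) * Lf y ^ (m-1) := by
  unfold Dop
  have h : ∀ i : Fin n, C (x i) * pderiv i (Lf y ^ m)
      = C ((m:ℝ) * (x i * y i)) * Lf y ^ (m-1) := by
    intro i
    rw [MvPolynomial.pderiv_pow, pderiv_Lf]
    rw [show ((m:ℕ) : MvPolynomial (Fin n) ℝ) = C ((m:ℝ)) from (map_natCast C m).symm,
      map_mul, map_mul]
    ring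
  rw [Finset.sum_congr rfl (fun i _ => h i)]
  rw [← Finset.sum_mul, ← map_sum]
  congr 2
  unfold ip
  rw [Finset.mul_sum]

lemma pow_pred_mul (p : MvPolynomial (Fin n) ℝ) (m : ℕ) :
    ((m:ℕ) : MvPolynomial (Fin n) ℝ) * p^(m-1) * p = ((m:ℕ) : MvPolynomial (Fin n) ℝ) * p^m := by
  cases m with
  | zero => simp
  | succ m => rw [Nat.add_sub_cancel, pow_succ]; ring

lemma natcast_pred_mul (m : ℕ) :
    (((m:ℕ) : MvPolynomial (Fin n) ℝ)) * (((m-1:ℕ) : MvPolynomial (Fin n) ℝ))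
      = C ((m:ℝ) * ((m:ℝ)-1)) := by
  cases m with
  | zero => simp
  | succ m =>
    rw [Nat.add_sub_cancel]
    rw [show (((m+1:ℕ)) : MvPolynomial (Fin n) ℝ) = C (((m+1:ℕ)):ℝ) from (map_natCast C _).symm,
      show (((m:ℕ)) : MvPolynomial (Fin n) ℝ) = C (((m:ℕ)):ℝ) from (map_natCast C _).symm,
      ← map_mul]
    congr 1
    push_cast
    ring

lemma Delta_L_pow (y : Fin n → ℝ) (m : ℕ) :
    Δ (Lf y ^ m) = C ((m:ℝ) * ((m:ℝ)-1) * ip y y) * Lf y ^ (m-2) := by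
  unfold Δ
  have h : ∀ i : Fin n, pderiv i (pderiv i (Lf y ^ m))
      = ((m:ℕ) : MvPolynomial (Fin n) ℝ) * (((m-1:ℕ)) : MvPolynomial (Fin n) ℝ)
        * Lf y ^ (m-1-1) * (C (y i) * C (y i)) := by
    intro i
    rw [MvPolynomial.pderiv_pow, pderiv_Lf]
    rw [Derivation.leibniz, Derivation.leibniz]
    rw [MvPolynomial.pderiv_pow, pderiv_Lf, MvPolynomial.pderiv_C]
    have hc : pderiv i (((m:ℕ)) : MvPolynomial (Fin n) ℝ) = 0 := by
      rw [show (((m:ℕ)) : MvPolynomial (Fin n) ℝ) = C (((m:ℕ)):ℝ) from (map_natCast C _).symm,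
        MvPolynomial.pderiv_C]
    rw [hc]
    simp only [smul_eq_mul, mul_zero, zero_mul, add_zero, zero_add, smul_zero]
    ring
  rw [Finset.sum_congr rfl (fun i _ => h i)]
  rw [← Finset.mul_sum]
  have hsub : m - 1 - 1 = m - 2 := by omega
  rw [hsub, natcast_pred_mul]
  have hsum : (∑ i : Fin n, C (y i) * C (y i) : MvPolynomial (Fin n) ℝ) = C (ip y y) := by
    unfold ip
    rw [map_sum]
    exact Finset.sum_congr rfl fun i _ => (map_mul C _ _).symm
  rw [mul_assoc, hsum]
  conv_rhs => rw [map_mul]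
  ring

lemma Delta_mul (u v : MvPolynomial (Fin n) ℝ) :
    Δ (u * v) = Δ u * v + ((∑ i : Fin n, pderiv i u * pderiv i v)
      + (∑ i : Fin n, pderiv i u * pderiv i v) + u * Δ v) := by
  unfold Δ
  have h : ∀ i : Fin n, pderiv i (pderiv i (u * v))
      = pderiv i (pderiv i u) * v + (pderiv i u * pderiv i v
        + pderiv i u * pderiv i v + u * pderiv i (pderiv i v)) := by
    intro i
    rw [MvPolynomial.pderiv_mul, map_add, MvPolynomial.pderiv_mul, MvPolynomial.pderiv_mul]
    ring
  rw [Finset.sum_congr rfl (fun i _ => h i), Finset.sum_add_distrib,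
    Finset.sum_add_distrib, Finset.sum_add_distrib, ← Finset.sum_mul, ← Finset.mul_sum]

lemma Delta_S2_pow (j : ℕ) :
    Δ ((S2 : MvPolynomial (Fin n) ℝ) ^ (j+1))
      = C (2*((j:ℝ)+1)*((n:ℝ)+2*(j:ℝ))) * S2 ^ j := by
  unfold Δ
  have h : ∀ i : Fin n, pderiv i (pderiv i ((S2 : MvPolynomial (Fin n) ℝ) ^ (j+1)))
      = ((j+1:ℕ) : MvPolynomial (Fin n) ℝ) * (((j:ℕ)) : MvPolynomial (Fin n) ℝ)
          * S2^(j-1) * ((X i + X i) * (X i + X i))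
        + ((j+1:ℕ) : MvPolynomial (Fin n) ℝ) * S2^j * (1+1) := by
    intro i
    rw [MvPolynomial.pderiv_pow, pderiv_S2]
    rw [Derivation.leibniz, Derivation.leibniz]
    have hc : pderiv i (((j+1:ℕ)) : MvPolynomial (Fin n) ℝ) = 0 := by
      rw [show (((j+1:ℕ)) : MvPolynomial (Fin n) ℝ) = C (((j+1:ℕ)):ℝ) from (map_natCast C _).symm,
        MvPolynomial.pderiv_C]
    rw [hc, MvPolynomial.pderiv_pow, pderiv_S2, map_add, MvPolynomial.pderiv_X_self]
    rw [Nat.add_sub_cancel]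
    simp only [smul_eq_mul]
    ring
  rw [Finset.sum_congr rfl (fun i _ => h i), Finset.sum_add_distrib]
  have h1 : ∑ i : Fin n, ((j+1:ℕ) : MvPolynomial (Fin n) ℝ) * (((j:ℕ)) : MvPolynomial (Fin n) ℝ)
      * S2^(j-1) * ((X i + X i) * (X i + X i))
      = ((j+1:ℕ) : MvPolynomial (Fin n) ℝ) * ((((j:ℕ)) : MvPolynomial (Fin n) ℝ) * S2^(j-1) * S2) * 4 := by
    rw [← Finset.mul_sum]
    have hs : (∑ i : Fin n, (X i + X i) * (X i + X i) : MvPolynomial (Fin n) ℝ) = S2 * 4 := by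
      unfold S2
      rw [Finset.sum_mul]
      apply Finset.sum_congr rfl
      intro i _
      ring
    rw [hs]
    ring
  have h2 : (((j:ℕ)) : MvPolynomial (Fin n) ℝ) * S2^(j-1) * S2
      = (((j:ℕ)) : MvPolynomial (Fin n) ℝ) * S2^j := pow_pred_mul _ j
  rw [h1, h2]
  have h3 : ∑ i : Fin n, ((j+1:ℕ) : MvPolynomial (Fin n) ℝ) * S2^j * (1+1)
      = ((j+1:ℕ) : MvPolynomial (Fin n) ℝ) * S2^j * (1+1) * (((n:ℕ)) : MvPolynomial (Fin n) ℝ) := by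
    rw [Finset.sum_const, Finset.card_univ, Fintype.card_fin]
    rw [nsmul_eq_mul]
    ring
  rw [h3]
  rw [show (((j+1:ℕ)) : MvPolynomial (Fin n) ℝ) = C (((j+1:ℕ)):ℝ) from (map_natCast C _).symm,
    show (((j:ℕ)) : MvPolynomial (Fin n) ℝ) = C (((j:ℕ)):ℝ) from (map_natCast C _).symm,
    show (((n:ℕ)) : MvPolynomial (Fin n) ℝ) = C (((n:ℕ)):ℝ) from (map_natCast C _).symm]
  rw [show (2*((j:ℝ)+1)*((n:ℝ)+2*(j:ℝ))) = ((j+1:ℕ):ℝ) * ((j:ℕ):ℝ) * 4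
      + ((j+1:ℕ):ℝ) * 2 * ((n:ℕ):ℝ) by push_cast; ring]
  rw [map_add, map_mul, map_mul, map_mul, map_mul,
    show (C (4:ℝ) : MvPolynomial (Fin n) ℝ) = 4 from map_ofNat C 4,
    show (C (2:ℝ) : MvPolynomial (Fin n) ℝ) = 2 from map_ofNat C 2]
  ring

lemma Delta_S2_L (y : Fin n → ℝ) (hY : ip y y = 1) (j m : ℕ) :
    Δ ((S2 : MvPolynomial (Fin n) ℝ)^(j+1) * Lf y ^ m)
      = C (2*((j:ℝ)+1)*((n:ℝ)+2*(j:ℝ)+2*(m:ℝ))) * (S2^j * Lf y ^ m)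
        + C ((m:ℝ)*((m:ℝ)-1)) * (S2^(j+1) * Lf y ^ (m-2)) := by
  rw [Delta_mul, Delta_S2_pow, Delta_L_pow, hY]
  have hcross : (∑ i : Fin n, pderiv i ((S2 : MvPolynomial (Fin n) ℝ)^(j+1)) * pderiv i (Lf y ^ m))
      = C (2*((j:ℝ)+1)*(m:ℝ)) * (S2^j * Lf y ^ m) := by
    have h : ∀ i : Fin n, pderiv i ((S2 : MvPolynomial (Fin n) ℝ)^(j+1)) * pderiv i (Lf y ^ m)
        = (((j+1:ℕ)) : MvPolynomial (Fin n) ℝ) * S2^j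
            * ((((m:ℕ)) : MvPolynomial (Fin n) ℝ) * Lf y ^ (m-1))
            * ((X i + X i) * C (y i)) := by
      intro i
      rw [MvPolynomial.pderiv_pow, MvPolynomial.pderiv_pow, pderiv_S2, pderiv_Lf,
        Nat.add_sub_cancel]
      ring
    rw [Finset.sum_congr rfl (fun i _ => h i), ← Finset.mul_sum]
    have hs : (∑ i : Fin n, (X i + X i) * C (y i) : MvPolynomial (Fin n) ℝ) = Lf y + Lf y := by
      unfold Lf
      rw [← Finset.sum_add_distrib]
      apply Finset.sum_congr rfl
      intro i _
      ring
    rw [hs]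
    have hm : ((((m:ℕ)) : MvPolynomial (Fin n) ℝ) * Lf y ^ (m-1)) * (Lf y + Lf y)
        = ((((m:ℕ)) : MvPolynomial (Fin n) ℝ) * Lf y ^ m) * 2 := by
      have := pow_pred_mul (n := n) (Lf y) m
      calc ((((m:ℕ)) : MvPolynomial (Fin n) ℝ) * Lf y ^ (m-1)) * (Lf y + Lf y)
          = ((((m:ℕ)) : MvPolynomial (Fin n) ℝ) * Lf y ^ (m-1) * Lf y) * 2 := by ring
        _ = ((((m:ℕ)) : MvPolynomial (Fin n) ℝ) * Lf y ^ m) * 2 := by rw [this]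
    calc (((j+1:ℕ)) : MvPolynomial (Fin n) ℝ) * S2^j
            * ((((m:ℕ)) : MvPolynomial (Fin n) ℝ) * Lf y ^ (m-1)) * (Lf y + Lf y)
        = (((j+1:ℕ)) : MvPolynomial (Fin n) ℝ) * S2^j
            * (((((m:ℕ)) : MvPolynomial (Fin n) ℝ) * Lf y ^ (m-1)) * (Lf y + Lf y)) := by ring
      _ = (((j+1:ℕ)) : MvPolynomial (Fin n) ℝ) * S2^j
            * (((((m:ℕ)) : MvPolynomial (Fin n) ℝ) * Lf y ^ m) * 2) := by rw [hm]
      _ = C (2*((j:ℝ)+1)*(m:ℝ)) * (S2^j * Lf y ^ m) := by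
          rw [show (((j+1:ℕ)) : MvPolynomial (Fin n) ℝ) = C (((j+1:ℕ)):ℝ) from (map_natCast C _).symm,
            show ((((m:ℕ))) : MvPolynomial (Fin n) ℝ) = C (((m:ℕ)):ℝ) from (map_natCast C _).symm,
            show (2*((j:ℝ)+1)*(m:ℝ)) = (((j+1:ℕ)):ℝ) * (((m:ℕ)):ℝ) * 2 by push_cast; ring,
            map_mul, map_mul, show (C (2:ℝ) : MvPolynomial (Fin n) ℝ) = 2 from map_ofNat C 2]
          ring
  rw [hcross]
  rw [show (2*((j:ℝ)+1)*((n:ℝ)+2*(j:ℝ)+2*(m:ℝ)))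
      = 2*((j:ℝ)+1)*((n:ℝ)+2*(j:ℝ)) + (2*((j:ℝ)+1)*(m:ℝ) + 2*((j:ℝ)+1)*(m:ℝ)) by ring,
    map_add, map_add,
    show ((m:ℝ)*((m:ℝ)-1)*1) = (m:ℝ)*((m:ℝ)-1) by ring]
  ring

lemma Cmul_merge (a b : ℝ) (P : MvPolynomial (Fin n) ℝ) :
    C a * (C b * P) = C (a*b) * P := by
  rw [← mul_assoc, ← map_mul]

lemma Delta_sum {ι : Type*} (s : Finset ι) (f : ι → MvPolynomial (Fin n) ℝ) :
    Δ (∑ j ∈ s, f j) = ∑ j ∈ s, Δ (f j) := by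
  unfold Δ
  have h : ∀ i : Fin n, pderiv i (pderiv i (∑ j ∈ s, f j))
      = ∑ j ∈ s, pderiv i (pderiv i (f j)) := by
    intro i
    rw [map_sum (pderiv i), map_sum (pderiv i)]
  rw [Finset.sum_congr rfl (fun i _ => h i), Finset.sum_comm]

lemma Delta_Cmul (a : ℝ) (p : MvPolynomial (Fin n) ℝ) : Δ (C a * p) = C a * Δ p := by
  unfold Δ
  rw [Finset.mul_sum]
  apply Finset.sum_congr rfl
  intro i _
  rw [MvPolynomial.pderiv_C_mul, MvPolynomial.pderiv_C_mul]

noncomputable def hpoly (k : ℕ) (x : Fin n → ℝ) : MvPolynomial (Fin n) ℝ :=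
  ∑ j ∈ Finset.range (k/2+1), C (nu n k j) * ((S2 : MvPolynomial (Fin n) ℝ)^j * Lf x^(k-2*j))

lemma hpoly_harmonic {k : ℕ} (hn : 2 ≤ n) (x : Fin n → ℝ) (hX : ip x x = 1) :
    Δ (hpoly k x) = 0 := by
  unfold hpoly
  rw [Delta_sum]
  have hterm : ∀ j ∈ Finset.range (k/2+1),
      Δ (C (nu n k j) * ((S2 : MvPolynomial (Fin n) ℝ)^j * Lf x^(k-2*j)))
        = C (nu n k j) * Δ ((S2 : MvPolynomial (Fin n) ℝ)^j * Lf x^(k-2*j)) :=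
    fun j _ => Delta_Cmul _ _
  rw [Finset.sum_congr rfl hterm]
  rw [Finset.sum_range_succ']
  -- j = 0 term
  have h0 : C (nu n k 0) * Δ ((S2 : MvPolynomial (Fin n) ℝ)^0 * Lf x^(k-2*0))
      = C (nu n k 0 * ((((k-2*0:ℕ)):ℝ) * ((((k-2*0:ℕ)):ℝ)-1)))
          * ((S2 : MvPolynomial (Fin n) ℝ)^0 * Lf x^(k-2*0-2)) := by
    rw [pow_zero, one_mul, one_mul, Delta_L_pow, hX, Cmul_merge]
    congr 2
    ring
  rw [h0]
  -- j+1 terms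
  have h1 : ∀ j ∈ Finset.range (k/2),
      C (nu n k (j+1)) * Δ ((S2 : MvPolynomial (Fin n) ℝ)^(j+1) * Lf x^(k-2*(j+1)))
        = C (nu n k (j+1) * (2*((j:ℝ)+1)*((n:ℝ)+2*(j:ℝ)+2*(((k-2*(j+1):ℕ)):ℝ))))
            * ((S2 : MvPolynomial (Fin n) ℝ)^j * Lf x^(k-2*(j+1)))
          + C (nu n k (j+1) * ((((k-2*(j+1):ℕ)):ℝ) * ((((k-2*(j+1):ℕ)):ℝ)-1)))
            * ((S2 : MvPolynomial (Fin n) ℝ)^(j+1) * Lf x^(k-2*(j+1)-2)) := by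
    intro j _
    rw [Delta_S2_L x hX j (k-2*(j+1)), mul_add, Cmul_merge, Cmul_merge]
  rw [Finset.sum_congr rfl h1, Finset.sum_add_distrib]
  -- second part of those sums, reindexed, plus j=0 term, gives full-range sum
  rw [add_assoc]
  have hcomb : (∑ j ∈ Finset.range (k/2),
        C (nu n k (j+1) * ((((k-2*(j+1):ℕ)):ℝ) * ((((k-2*(j+1):ℕ)):ℝ)-1)))
          * ((S2 : MvPolynomial (Fin n) ℝ)^(j+1) * Lf x^(k-2*(j+1)-2)))
      + C (nu n k 0 * ((((k-2*0:ℕ)):ℝ) * ((((k-2*0:ℕ)):ℝ)-1)))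
          * ((S2 : MvPolynomial (Fin n) ℝ)^0 * Lf x^(k-2*0-2))
      = ∑ j ∈ Finset.range (k/2+1),
          C (nu n k j * ((((k-2*j:ℕ)):ℝ) * ((((k-2*j:ℕ)):ℝ)-1)))
            * ((S2 : MvPolynomial (Fin n) ℝ)^j * Lf x^(k-2*j-2)) := by
    rw [Finset.sum_range_succ']
  rw [hcomb]
  -- peel the top term of the full-range sum: its coefficient vanishes
  rw [Finset.sum_range_succ]
  have htop : nu n k (k/2) * ((((k-2*(k/2):ℕ)):ℝ) * ((((k-2*(k/2):ℕ)):ℝ)-1)) = 0 := by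
    have h : k - 2*(k/2) = 0 ∨ k - 2*(k/2) = 1 := by omega
    rcases h with h | h <;> rw [h] <;> norm_num
  rw [htop, map_zero, zero_mul, add_zero, ← Finset.sum_add_distrib]
  apply Finset.sum_eq_zero
  intro j hj
  simp only [Finset.mem_range] at hj
  have h2j : 2*(j+1) ≤ k := by omega
  rw [show k-2*(j+1) = k-2*j-2 from by omega]
  rw [← add_mul, ← map_add]
  have hcast1 : (((k-2*j-2:ℕ)):ℝ) = (k:ℝ)-2*(j:ℝ)-2 := by
    have he : (k - 2*j - 2 : ℕ) = k - (2*j+2) := by omega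
    rw [he, Nat.cast_sub (by omega : 2*j+2 ≤ k)]
    push_cast; ring
  have hcast0 : (((k-2*j:ℕ)):ℝ) = (k:ℝ)-2*(j:ℝ) := by
    have h2j' : 2*j ≤ k := by omega
    rw [Nat.cast_sub h2j']; push_cast; ring
  have hz : nu n k (j+1) * (2*((j:ℝ)+1)*((n:ℝ)+2*(j:ℝ)+2*(((k-2*j-2:ℕ)):ℝ)))
      + nu n k j * ((((k-2*j:ℕ)):ℝ) * ((((k-2*j:ℕ)):ℝ)-1)) = 0 := by
    have hrec : nu n k (j+1) = nu n k j * (-(((k:ℝ)-2*j)*((k:ℝ)-2*j-1)))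
        / (2*((j:ℝ)+1)*(2*(k:ℝ)-2*(j:ℝ)-4+(n:ℝ))) := rfl
    have hden : (2*((j:ℝ)+1)*(2*(k:ℝ)-2*(j:ℝ)-4+(n:ℝ))) ≠ 0 := by
      have hb : (2:ℝ) ≤ n := by exact_mod_cast hn
      have hb2 : 2*((j:ℝ)+1) ≤ k := by exact_mod_cast h2j
      have hj0 : (0:ℝ) ≤ j := Nat.cast_nonneg j
      have : (0:ℝ) < 2*((j:ℝ)+1)*(2*(k:ℝ)-2*(j:ℝ)-4+(n:ℝ)) := by nlinarith
      linarith
    rw [hcast1, hcast0, hrec]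
    have heq : (2*((j:ℝ)+1)*((n:ℝ)+2*(j:ℝ)+2*((k:ℝ)-2*(j:ℝ)-2)))
        = (2*((j:ℝ)+1)*(2*(k:ℝ)-2*(j:ℝ)-4+(n:ℝ))) := by ring
    rw [heq, div_mul_cancel₀ _ hden]
    ring
  rw [hz, map_zero, zero_mul]

lemma B_one_one : B (1 : MvPolynomial (Fin n) ℝ) 1 = 1 := by
  have h1 : (1 : MvPolynomial (Fin n) ℝ) = monomial 0 1 := by
    rw [MvPolynomial.monomial_zero']
    exact MvPolynomial.C_1.symm
  rw [h1, B_monomial_left]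
  rw [MvPolynomial.coeff_monomial, if_pos rfl]
  unfold w
  simp

lemma B_L_L (x y : Fin n → ℝ) (m : ℕ) :
    B (Lf x ^ m) (Lf y ^ m) = (Nat.factorial m : ℝ) * (ip x y)^m := by
  induction m with
  | zero => simp [B_one_one]
  | succ m ih =>
    rw [pow_succ, mul_comm (Lf x ^ m) (Lf x), adjoint_L, Dop_L_pow, Nat.add_sub_cancel,
      B_Cmul_right, ih]
    rw [Nat.factorial_succ]
    push_cast
    ring

lemma B_S2pow_L {k : ℕ} (y : Fin n → ℝ) (hY : ip y y = 1) :
    ∀ j, 2*j ≤ k → ∀ u : MvPolynomial (Fin n) ℝ,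
      B ((S2 : MvPolynomial (Fin n) ℝ)^j * u) (Lf y ^ k)
        = Dp k (2*j) * B u (Lf y ^ (k - 2*j)) := by
  intro j
  induction j with
  | zero =>
    intro _ u
    rw [pow_zero, one_mul]
    simp [Dp]
  | succ j ih =>
    intro hj u
    have hj' : 2*j ≤ k := by omega
    have hstep : (S2 : MvPolynomial (Fin n) ℝ)^(j+1) * u = S2^j * (S2 * u) := by
      rw [pow_succ]; ring
    rw [hstep, ih hj' (S2 * u), adjoint_S2, Delta_L_pow, hY, B_Cmul_right]
    have hcast : ((k - 2*j : ℕ) : ℝ) = (k:ℝ) - 2*j := by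
      rw [Nat.cast_sub hj']; push_cast; ring
    have hD : Dp k (2*(j+1)) = Dp k (2*j) * ((k:ℝ)-2*j) * ((k:ℝ)-2*j-1) := by
      rw [show 2*(j+1) = (2*j)+1+1 from by ring]
      unfold Dp
      rw [Finset.prod_range_succ, Finset.prod_range_succ]
      push_cast
      ring
    rw [hD, show k - 2*(j+1) = k - 2*j - 2 from by omega, hcast]
    ring

lemma Dp_fact {k : ℕ} : ∀ r, r ≤ k → Dp k r * ((Nat.factorial (k-r)) : ℝ) = (Nat.factorial k : ℝ) := by
  intro r
  induction r with
  | zero => simp [Dp]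
  | succ r ih =>
    intro hr
    have hr' : r ≤ k := by omega
    have hD : Dp k (r+1) = Dp k r * ((k:ℝ) - r) := by
      unfold Dp; rw [Finset.prod_range_succ]
    have hfac : ((Nat.factorial (k-r)) : ℝ) = ((k:ℝ) - r) * ((Nat.factorial (k-r-1)) : ℝ) := by
      have h1 : k - r = (k - r - 1) + 1 := by omega
      rw [h1, Nat.factorial_succ]
      have h2 : ((k - r - 1 : ℕ) : ℝ) + 1 = (k:ℝ) - r := by
        have h3 : (k - r - 1 : ℕ) = k - (r+1) := by omega
        rw [h3, Nat.cast_sub hr]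
        push_cast
        ring
      push_cast
      rw [h2]
    have hih := ih hr'
    rw [hfac] at hih
    rw [hD, show k - (r+1) = k - r - 1 from by omega]
    nlinarith [hih]

lemma B_hpoly_L {k : ℕ} (x y : Fin n → ℝ) (hY : ip y y = 1) :
    B (hpoly k x) (Lf y ^ k) = (Nat.factorial k : ℝ) * P n k (ip x y) := by
  unfold hpoly
  rw [B_sum_left]
  have hterm : ∀ j ∈ Finset.range (k/2+1),
      B (C (nu n k j) * ((S2 : MvPolynomial (Fin n) ℝ)^j * Lf x^(k-2*j))) (Lf y ^ k)
        = nu n k j * ((Nat.factorial k : ℝ) * (ip x y)^(k-2*j)) := by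
    intro j hj
    simp only [Finset.mem_range] at hj
    have hjk : 2*j ≤ k := by omega
    rw [B_Cmul_left, B_S2pow_L y hY j hjk, B_L_L]
    have hDf : Dp k (2*j) * ((Nat.factorial (k-2*j)) : ℝ) = (Nat.factorial k : ℝ) :=
      Dp_fact (2*j) hjk
    rw [← hDf]
    ring
  rw [Finset.sum_congr rfl hterm]
  unfold P
  rw [Finset.mul_sum]
  rw [Finset.sum_subset (by intro a ha; simp only [Finset.mem_range] at *; omega :
    Finset.range (k/2+1) ⊆ Finset.range (k+1))]
  · exact Finset.sum_congr rfl fun j _ => by ring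
  · intro j hj hj2
    simp only [Finset.mem_range] at hj hj2
    rw [nu_eq_zero j (by omega)]
    ring

lemma hpoly_decomp (k : ℕ) (y : Fin n → ℝ) :
    hpoly k y = Lf y ^ k + S2 * (∑ j ∈ Finset.range (k/2),
      C (nu n k (j+1)) * ((S2 : MvPolynomial (Fin n) ℝ)^j * Lf y^(k-2*(j+1)))) := by
  unfold hpoly
  rw [Finset.sum_range_succ']
  have h0 : C (nu n k 0) * ((S2 : MvPolynomial (Fin n) ℝ)^0 * Lf y^(k-2*0)) = Lf y ^ k := by
    have : nu n k 0 = 1 := rfl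
    rw [this, map_one, pow_zero, show k-2*0 = k from by omega]
    ring
  rw [h0, Finset.mul_sum, add_comm]
  congr 1
  apply Finset.sum_congr rfl
  intro j _
  rw [pow_succ]
  ring

lemma B_hpoly_hpoly {k : ℕ} (hn : 2 ≤ n) (x y : Fin n → ℝ) (hX : ip x x = 1) (hY : ip y y = 1) :
    B (hpoly k x) (hpoly k y) = (Nat.factorial k : ℝ) * P n k (ip x y) := by
  rw [hpoly_decomp k y, B_add_right, B_hpoly_L x y hY]
  have h2 : B (hpoly k x) (S2 * (∑ j ∈ Finset.range (k/2),
      C (nu n k (j+1)) * ((S2 : MvPolynomial (Fin n) ℝ)^j * Lf y^(k-2*(j+1))))) = 0 := by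
    rw [B_symm, adjoint_S2, hpoly_harmonic hn x hX]
    rw [B_symm, B_zero_left]
  rw [h2, add_zero]

lemma moment_nonneg_P {k m : ℕ} (hn : 2 ≤ n) (p : Fin m → Fin n → ℝ)
    (hp : ∀ i, ip (p i) (p i) = 1) :
    0 ≤ ∑ i : Fin m, ∑ i' : Fin m, P n k (ip (p i) (p i')) := by
  have key : (Nat.factorial k : ℝ) * ∑ i : Fin m, ∑ i' : Fin m, P n k (ip (p i) (p i'))
      = B (∑ i : Fin m, hpoly k (p i)) (∑ i : Fin m, hpoly k (p i)) := by
    rw [B_sum_left, Finset.mul_sum]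
    apply Finset.sum_congr rfl
    intro i _
    rw [B_sum_right, Finset.mul_sum]
    apply Finset.sum_congr rfl
    intro i' _
    rw [B_hpoly_hpoly hn (p i) (p i') (hp i) (hp i')]
  have hBnn := B_self_nonneg (∑ i : Fin m, hpoly k (p i))
  rw [← key] at hBnn
  have hfac : (0:ℝ) < (Nat.factorial k : ℝ) := by positivity
  nlinarith [hBnn, hfac]


lemma Geg_one {n : ℕ} (hn : 2 ≤ n) : ∀ k, Geg n k 1 = 1 := by
  intro k
  induction k using Nat.strong_induction_on with
  | _ k ih =>
    match k with
    | 0 => rfl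
    | 1 => rfl
    | (k+2) =>
      have h1 : Geg n (k+1) 1 = 1 := ih (k+1) (by omega)
      have h2 : Geg n k 1 = 1 := ih k (by omega)
      have h2n : (2:ℝ) ≤ n := by exact_mod_cast hn
      have hd : ((k:ℝ)+2) + (n:ℝ) - 3 ≠ 0 := by
        have : (0:ℝ) ≤ k := Nat.cast_nonneg k
        nlinarith
      show ((2 * ((k : ℝ) + 2) + (n : ℝ) - 4) * 1 * Geg n (k + 1) 1 -
          (((k : ℝ) + 2) - 1) * Geg n k 1) / (((k : ℝ) + 2) + (n : ℝ) - 3) = 1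
      rw [h1, h2]
      field_simp
      ring

lemma moment_nonneg_Geg {n k m : ℕ} (hn : 2 ≤ n) (p : Fin m → Fin n → ℝ)
    (hp : ∀ i, ip (p i) (p i) = 1) :
    0 ≤ ∑ i : Fin m, ∑ i' : Fin m, Geg n k (ip (p i) (p i')) := by
  have h1 := moment_nonneg_P (k := k) hn p hp
  have h2 : ∑ i : Fin m, ∑ i' : Fin m, P n k (ip (p i) (p i'))
      = lam n k * ∑ i : Fin m, ∑ i' : Fin m, Geg n k (ip (p i) (p i')) := by
    rw [Finset.mul_sum]
    apply Finset.sum_congr rfl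
    intro i _
    rw [Finset.mul_sum]
    apply Finset.sum_congr rfl
    intro i' _
    exact P_eq_geg hn k _
  rw [h2] at h1
  have hl := lam_pos hn k
  nlinarith [h1, hl]

end Delsarte

/-- Delsarte's linear programming bound: if f has nonnegative Gegenbauer coefficients
and f ≤ 0 on T, then any T-spherical code P of cardinality m satisfies m·f₀ ≤ f(1). -/
theorem delsarte_bound {n m d : ℕ} (hn : 2 ≤ n) (f : ℝ → ℝ) (c : ℕ → ℝ)
    (hc : ∀ k, 0 ≤ c k)
    (hf : ∀ t ∈ Set.Icc (-1 : ℝ) 1, f t = ∑ k ∈ Finset.range (d + 1), c k * Geg n k t)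
    (T : Set ℝ) (hT : T ⊆ Set.Ico (-1 : ℝ) 1) (hfT : ∀ t ∈ T, f t ≤ 0)
    (p : Fin m → EuclideanSpace ℝ (Fin n)) (hp : ∀ i, ‖p i‖ = 1)
    (hinj : Function.Injective p)
    (hpt : ∀ i j, i ≠ j → ⟪p i, p j⟫ ∈ T) :
    (m : ℝ) * c 0 ≤ f 1 := by
  classical
  have hip : ∀ i j : Fin m, (⟪p i, p j⟫ : ℝ) = Delsarte.ip (fun t => p i t) (fun t => p j t) := by
    intro i j
    rw [PiLp.inner_apply]
    unfold Delsarte.ip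
    apply Finset.sum_congr rfl
    intro t _
    simp [RCLike.inner_apply, conj_trivial]
    ring
  have hunit : ∀ i, Delsarte.ip (fun t => p i t) (fun t => p i t) = 1 := by
    intro i
    rw [← hip]
    rw [real_inner_self_eq_norm_mul_norm, hp i]
    norm_num
  have hone : f 1 = ∑ k ∈ Finset.range (d + 1), c k := by
    rw [hf 1 (by constructor <;> norm_num)]
    apply Finset.sum_congr rfl
    intro k _
    rw [Delsarte.Geg_one hn k, mul_one]
  have hf1nn : 0 ≤ f 1 := by
    rw [hone]
    exact Finset.sum_nonneg fun k _ => hc k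
  rcases Nat.eq_zero_or_pos m with rfl | hm
  · simpa using hf1nn
  -- abbreviation
  set t : Fin m → Fin m → ℝ := fun i j => Delsarte.ip (fun s => p i s) (fun s => p j s) with ht
  have htIcc : ∀ i j, t i j ∈ Set.Icc (-1:ℝ) 1 := by
    intro i j
    by_cases h : i = j
    · subst h; rw [ht]; simp only [hunit]; constructor <;> norm_num
    · have h1 := hT (hpt i j h)
      rw [hip] at h1
      exact ⟨h1.1, le_of_lt h1.2⟩
  have hM : ∀ k, 0 ≤ ∑ i : Fin m, ∑ j : Fin m, Geg n k (t i j) :=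
    fun k => Delsarte.moment_nonneg_Geg hn _ hunit
  have hM0 : ∑ i : Fin m, ∑ j : Fin m, Geg n 0 (t i j) = (m:ℝ) * m := by
    have : ∀ (s : ℝ), Geg n 0 s = 1 := fun s => rfl
    simp [this]
  -- S = sum of f over all pairs
  have hS1 : ∑ i : Fin m, ∑ j : Fin m, f (t i j)
      = ∑ k ∈ Finset.range (d+1), c k * ∑ i : Fin m, ∑ j : Fin m, Geg n k (t i j) := by
    have h1 : ∀ i j : Fin m, f (t i j) = ∑ k ∈ Finset.range (d + 1), c k * Geg n k (t i j) :=
      fun i j => hf _ (htIcc i j)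
    calc ∑ i : Fin m, ∑ j : Fin m, f (t i j)
        = ∑ i : Fin m, ∑ j : Fin m, ∑ k ∈ Finset.range (d + 1), c k * Geg n k (t i j) := by
          apply Finset.sum_congr rfl; intro i _
          apply Finset.sum_congr rfl; intro j _
          exact h1 i j
      _ = ∑ i : Fin m, ∑ k ∈ Finset.range (d+1), ∑ j : Fin m, c k * Geg n k (t i j) := by
          apply Finset.sum_congr rfl; intro i _
          rw [Finset.sum_comm]
      _ = ∑ k ∈ Finset.range (d+1), ∑ i : Fin m, ∑ j : Fin m, c k * Geg n k (t i j) :=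
          Finset.sum_comm
      _ = ∑ k ∈ Finset.range (d+1), c k * ∑ i : Fin m, ∑ j : Fin m, Geg n k (t i j) := by
          apply Finset.sum_congr rfl; intro k _
          rw [Finset.mul_sum]
          apply Finset.sum_congr rfl; intro i _
          rw [Finset.mul_sum]
  have hS2 : c 0 * ((m:ℝ) * m) ≤ ∑ i : Fin m, ∑ j : Fin m, f (t i j) := by
    rw [hS1]
    rw [Finset.sum_range_succ']
    have h2 : 0 ≤ ∑ k ∈ Finset.range d, c (k+1) * ∑ i : Fin m, ∑ j : Fin m, Geg n (k+1) (t i j) :=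
      Finset.sum_nonneg fun k _ => mul_nonneg (hc (k+1)) (hM (k+1))
    rw [hM0]
    linarith
  have hS3 : ∑ i : Fin m, ∑ j : Fin m, f (t i j) ≤ (m:ℝ) * f 1 := by
    have hrow : ∀ i : Fin m, ∑ j : Fin m, f (t i j) ≤ f 1 := by
      intro i
      have hsplit : ∑ j : Fin m, f (t i j)
          = f (t i i) + ∑ j ∈ Finset.univ.erase i, f (t i j) := by
        rw [← Finset.add_sum_erase _ _ (Finset.mem_univ i)]
      rw [hsplit]
      have hd : f (t i i) = f 1 := by rw [ht]; simp only [hunit]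
      have hoff : ∑ j ∈ Finset.univ.erase i, f (t i j) ≤ 0 := by
        apply Finset.sum_nonpos
        intro j hj
        have hne : j ≠ i := Finset.ne_of_mem_erase hj
        apply hfT
        have := hpt i j (Ne.symm hne)
        rw [hip] at this
        exact this
      linarith
    calc ∑ i : Fin m, ∑ j : Fin m, f (t i j) ≤ ∑ _i : Fin m, f 1 :=
          Finset.sum_le_sum fun i _ => hrow i
      _ = (m:ℝ) * f 1 := by rw [Finset.sum_const, Finset.card_univ, Fintype.card_fin, nsmul_eq_mul]
  have hfinal : c 0 * ((m:ℝ) * m) ≤ (m:ℝ) * f 1 := le_trans hS2 hS3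
  have hmpos : (0:ℝ) < m := by exact_mod_cast hm
  nlinarith [hfinal, hmpos]
end

section
/- Let P ⊂ S^{n−1} be a set of unit vectors such that ⟨p_i,p_j⟩ ∈ {a,−a} for all i ≠ j, with 0 < a < 1 and n·a² < 1. Then |P| ≤ n(1−a²)/(1−n a²). -/
open scoped RealInnerProductSpace

private lemma sum4_swap {α β : Type*} [Fintype α] [Fintype β]
    (F : α → α → β → β → ℝ) :
    ∑ i, ∑ j, ∑ k, ∑ l, F i j k l = ∑ k, ∑ l, ∑ i, ∑ j, F i j k l := by
  calc ∑ i, ∑ j, ∑ k, ∑ l, F i j k l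
      = ∑ i, ∑ k, ∑ j, ∑ l, F i j k l :=
        Finset.sum_congr rfl fun i _ => Finset.sum_comm 
    _ = ∑ k, ∑ i, ∑ j, ∑ l, F i j k l := Finset.sum_comm
    _ = ∑ k, ∑ i, ∑ l, ∑ j, F i j k l :=
        Finset.sum_congr rfl fun k _ => Finset.sum_congr rfl fun i _ =>
          Finset.sum_comm
    _ = ∑ k, ∑ l, ∑ i, ∑ j, F i j k l :=
        Finset.sum_congr rfl fun k _ => Finset.sum_comm

/-- The relative bound for equiangular sets of unit vectors: if all pairwise inner
products are ±a with n·a² < 1, then m ≤ n(1−a²)/(1−na²). -/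
theorem relative_bound {n m : ℕ} (hn : 2 ≤ n) (a : ℝ) (ha0 : 0 < a) (ha1 : a < 1)
    (hna : (n : ℝ) * a ^ 2 < 1)
    (p : Fin m → EuclideanSpace ℝ (Fin n)) (hp : ∀ i, ‖p i‖ = 1)
    (hinj : Function.Injective p)
    (hip : ∀ i j, i ≠ j → ⟪p i, p j⟫ = a ∨ ⟪p i, p j⟫ = -a) :
    (m : ℝ) ≤ (n : ℝ) * (1 - a ^ 2) / (1 - (n : ℝ) * a ^ 2) := by
  classical
  have hden : (0:ℝ) < 1 - (n:ℝ) * a ^ 2 := by linarith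
  rcases Nat.eq_zero_or_pos m with hm0 | hm
  · subst hm0
    simp only [Nat.cast_zero]
    have hn' : (2:ℝ) ≤ n := by exact_mod_cast hn
    apply div_nonneg _ hden.le
    nlinarith
  have hm' : (1:ℝ) ≤ m := by exact_mod_cast hm
  set A : Fin n → Fin n → ℝ := fun k l => ∑ i, p i k * p i l with hA
  have hinner : ∀ i j : Fin m, ⟪p i, p j⟫ = ∑ k, p i k * p j k := by
    intro i j
    simp [PiLp.inner_apply, RCLike.inner_apply, conj_trivial]
    exact Finset.sum_congr rfl fun k _ => mul_comm _ _
  -- quadruple sum identity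
  have hS : ∑ i, ∑ j, ⟪p i, p j⟫ ^ 2 = ∑ k, ∑ l, A k l ^ 2 := by
    simp only [hinner, hA]
    calc ∑ i, ∑ j, (∑ k, p i k * p j k) ^ 2
        = ∑ i, ∑ j, ∑ k, ∑ l, p i k * p i l * (p j k * p j l) := by
          refine Finset.sum_congr rfl fun i _ => Finset.sum_congr rfl fun j _ => ?_
          rw [sq, Finset.sum_mul_sum]
          exact Finset.sum_congr rfl fun k _ => Finset.sum_congr rfl fun l _ => by ring
      _ = ∑ k, ∑ l, ∑ i, ∑ j, p i k * p i l * (p j k * p j l) := sum4_swap _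
      _ = ∑ k, ∑ l, (∑ i, p i k * p i l) ^ 2 := by
          refine Finset.sum_congr rfl fun k _ => Finset.sum_congr rfl fun l _ => ?_
          rw [sq, Finset.sum_mul_sum]
  -- trace of A is m
  have htr : ∑ k, A k k = (m : ℝ) := by
    simp only [hA]
    rw [Finset.sum_comm]
    have : ∀ i : Fin m, ∑ k, p i k * p i k = 1 := by
      intro i
      have := hinner i i
      rw [real_inner_self_eq_norm_sq, hp i] at this
      simpa using this.symm
    simp [this]
  -- Cauchy-Schwarz: m^2 ≤ n * ∑∑ A^2
  have hCS : (m:ℝ) ^ 2 ≤ (n:ℝ) * ∑ k, ∑ l, A k l ^ 2 := by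
    have h1 : (∑ k, A k k) ^ 2 ≤ (Finset.univ : Finset (Fin n)).card * ∑ k, A k k ^ 2 :=
      sq_sum_le_card_mul_sum_sq
    have h2 : ∑ k, A k k ^ 2 ≤ ∑ k, ∑ l, A k l ^ 2 := by
      refine Finset.sum_le_sum fun k _ => ?_
      exact Finset.single_le_sum (fun l _ => sq_nonneg (A k l)) (Finset.mem_univ k)
    rw [htr] at h1
    simp only [Finset.card_univ, Fintype.card_fin] at h1
    calc (m:ℝ)^2 ≤ (n:ℝ) * ∑ k, A k k ^ 2 := h1
      _ ≤ (n:ℝ) * ∑ k, ∑ l, A k l ^ 2 := by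
          apply mul_le_mul_of_nonneg_left h2 (by positivity)
  -- value of the sum of squared inner products
  have hval : ∑ i, ∑ j, ⟪p i, p j⟫ ^ 2 = (m:ℝ) * (1 + ((m:ℝ) - 1) * a ^ 2) := by
    have hrow : ∀ i : Fin m, ∑ j, ⟪p i, p j⟫ ^ 2 = 1 + ((m:ℝ) - 1) * a ^ 2 := by
      intro i
      rw [← Finset.add_sum_erase _ _ (Finset.mem_univ i)]
      have h1 : ⟪p i, p i⟫ = 1 := by
        rw [real_inner_self_eq_norm_sq, hp i]; norm_num
      have h2 : ∑ j ∈ Finset.univ.erase i, ⟪p i, p j⟫ ^ 2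
          = ∑ _j ∈ Finset.univ.erase i, a ^ 2 := by
        refine Finset.sum_congr rfl fun j hj => ?_
        rcases hip i j (Ne.symm (Finset.ne_of_mem_erase hj)) with h | h <;> simp [h]
      rw [h1, h2, Finset.sum_const, Finset.card_erase_of_mem (Finset.mem_univ i),
        Finset.card_univ, Fintype.card_fin, nsmul_eq_mul, Nat.cast_sub hm, Nat.cast_one]
      norm_num
    calc ∑ i, ∑ j, ⟪p i, p j⟫ ^ 2 = ∑ _i : Fin m, (1 + ((m:ℝ) - 1) * a ^ 2) :=
          Finset.sum_congr rfl fun i _ => hrow i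
      _ = (m:ℝ) * (1 + ((m:ℝ) - 1) * a ^ 2) := by
          rw [Finset.sum_const, Finset.card_univ, Fintype.card_fin, nsmul_eq_mul]
  -- combine
  have key : (m:ℝ) ^ 2 ≤ (n:ℝ) * ((m:ℝ) * (1 + ((m:ℝ) - 1) * a ^ 2)) := by
    rw [← hval, hS]; exact hCS
  rw [le_div_iff₀ hden]
  have hmpos : (0:ℝ) < m := by linarith
  nlinarith [key, hmpos, mul_pos hmpos hden]
end

section
/- For m ≥ 2, real s with 0 < s ≤ 2, and points p_1,…,p_m on S^{n−1}, define ρ_s(x,y) = ‖x−y‖^s. Then the constant multiset with all m(m−1)/2 entries equal to (2m/(m−1))^{s/2} weakly majorizes the multiset {ρ_s(p_i,p_j) : i < j}. -/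
lemma card_pairs (m : ℕ) :
    (Finset.univ.filter (fun q : Fin m × Fin m => q.1 < q.2)).card = m * (m - 1) / 2 := by
  rw [Finset.card_filter, ← Finset.univ_product_univ, Finset.sum_product]
  have h1 : ∀ i : Fin m, (∑ j : Fin m, if i < j then (1:ℕ) else 0) = m - 1 - (i : ℕ) := by
    intro i
    rw [← Finset.card_filter]
    have : Finset.univ.filter (fun j : Fin m => i < j) = Finset.Ioi i := by
      ext j; simp
    rw [this, Fin.card_Ioi]
  simp only [h1]
  rw [Fin.sum_univ_eq_sum_range (fun i => m - 1 - i), ← Finset.sum_range_id m,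
    ← Finset.sum_range_reflect (fun i => (i:ℕ)) m]

lemma sorted_avg (l : List ℝ) (hl : l.Pairwise (· ≤ ·)) (k : ℕ) (hk : k ≤ l.length) :
    (l.length : ℝ) * (l.take k).sum ≤ (k : ℝ) * l.sum := by
  rcases eq_or_lt_of_le hk with h | h
  · rw [h, List.take_length]
  · set c : ℝ := l.get ⟨k, h⟩ with hc
    have htake : ∀ x ∈ l.take k, x ≤ c := by
      intro x hx
      obtain ⟨i, hi⟩ := List.mem_iff_get.1 hx
      have hilt : (i : ℕ) < k := lt_of_lt_of_le i.2 (by simp [List.length_take])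
      have hil : (i : ℕ) < l.length := lt_trans hilt h
      have : x = l.get ⟨i, hil⟩ := by
        rw [← hi]
        simp [List.getElem_take]
      rw [this, hc]
      exact hl.rel_get_of_lt (by simpa using hilt)
    have hdrop : ∀ x ∈ l.drop k, c ≤ x := by
      intro x hx
      obtain ⟨i, hi⟩ := List.mem_iff_get.1 hx
      have hil : k + (i : ℕ) < l.length := by
        have := i.2; simp [List.length_drop] at this; omega
      have : x = l.get ⟨k + i, hil⟩ := by
        rw [← hi]
        simp [List.getElem_drop]
      rw [this, hc]
      exact hl.rel_get_of_le (by simp)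
    have h1 : (l.take k).sum ≤ (k : ℝ) * c := by
      have := List.sum_le_card_nsmul (l.take k) c htake
      rwa [List.length_take, min_eq_left hk, nsmul_eq_mul] at this
    have h2 : ((l.length - k : ℕ) : ℝ) * c ≤ (l.drop k).sum := by
      have := List.card_nsmul_le_sum (l.drop k) c hdrop
      rwa [List.length_drop, nsmul_eq_mul] at this
    have hsum := List.sum_take_add_sum_drop l k
    have hcast : ((l.length - k : ℕ) : ℝ) = (l.length : ℝ) - k := by
      rw [Nat.cast_sub hk]
    rw [hcast] at h2
    have hklen : (k : ℝ) ≤ (l.length : ℝ) := Nat.cast_le.2 hk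
    have hk0 : (0:ℝ) ≤ k := Nat.cast_nonneg k
    nlinarith [mul_le_mul_of_nonneg_left h1 (sub_nonneg.2 hklen),
      mul_le_mul_of_nonneg_left h2 hk0, hsum]

open Finset in
lemma sum_sq_pairs {n m : ℕ} (p : Fin m → EuclideanSpace ℝ (Fin n)) (hp : ∀ i, ‖p i‖ = 1) :
    ∑ q ∈ Finset.univ.filter (fun q : Fin m × Fin m => q.1 < q.2), ‖p q.1 - p q.2‖ ^ 2
      ≤ (m : ℝ) ^ 2 := by
  set f : Fin m × Fin m → ℝ := fun q => ‖p q.1 - p q.2‖ ^ 2 with hf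
  set T := Finset.univ.filter (fun q : Fin m × Fin m => q.1 < q.2) with hT
  set T' := Finset.univ.filter (fun q : Fin m × Fin m => q.2 < q.1) with hT'
  have hfull : ∑ q : Fin m × Fin m, f q = 2 * (m:ℝ)^2 - 2 * ‖∑ i, p i‖^2 := by
    rw [← Finset.univ_product_univ, Finset.sum_product]
    have hterm : ∀ i j : Fin m, f (i, j) = 2 - 2 * (inner ℝ (p i) (p j) : ℝ) := by
      intro i j
      simp only [hf]
      rw [@norm_sub_sq_real, hp, hp]
      ring
    simp only [hterm]
    have hinner : ∑ i : Fin m, ∑ j : Fin m, (inner ℝ (p i) (p j) : ℝ) = ‖∑ i, p i‖^2 := by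
      rw [← real_inner_self_eq_norm_sq, sum_inner]
      congr 1
      ext i
      rw [inner_sum]
    rw [Finset.sum_comm] at *
    simp only [Finset.sum_sub_distrib, Finset.sum_const, Finset.card_univ, Fintype.card_fin,
      nsmul_eq_mul, ← Finset.mul_sum]
    rw [← hinner]
    rw [Finset.sum_comm]
    ring
  have hswap : ∑ q ∈ T', f q = ∑ q ∈ T, f q := by
    apply Finset.sum_nbij' (fun q => Prod.swap q) (fun q => Prod.swap q)
    · intro q hq; simp only [hT', hT, Finset.mem_filter, Finset.mem_univ, true_and] at *
      simpa using hq
    · intro q hq; simp only [hT', hT, Finset.mem_filter, Finset.mem_univ, true_and] at *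
      simpa using hq
    · intro q _; simp
    · intro q _; simp
    · intro q _; simp [hf, norm_sub_rev]
  have hdisj : Disjoint T T' := by
    rw [Finset.disjoint_left]
    intro q hq hq'
    simp only [hT, hT', Finset.mem_filter] at hq hq'
    exact absurd hq'.2 (lt_asymm hq.2)
  have hnonneg : ∀ q ∈ (Finset.univ : Finset (Fin m × Fin m)), 0 ≤ f q := by
    intro q _; positivity
  have hsub : ∑ q ∈ T ∪ T', f q ≤ ∑ q : Fin m × Fin m, f q :=
    Finset.sum_le_sum_of_subset_of_nonneg (Finset.subset_univ _) (fun q hq _ => hnonneg q hq)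
  rw [Finset.sum_union hdisj, hswap] at hsub
  have hn2 : (0:ℝ) ≤ ‖∑ i, p i‖^2 := by positivity
  nlinarith [hsub, hfull]

/-- For 0 < s ≤ 2 and unit vectors p₁,…,p_m, the constant multiset with all
m(m−1)/2 entries equal to (2m/(m−1))^{s/2} weakly majorizes the multiset of pairwise
values ‖pᵢ−pⱼ‖^s. -/
theorem replicate_weakMaj_riesz {n m : ℕ} (hm : 2 ≤ m) (s : ℝ) (hs0 : 0 < s)
    (hs2 : s ≤ 2) (p : Fin m → EuclideanSpace ℝ (Fin n)) (hp : ∀ i, ‖p i‖ = 1) :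
    WeakMaj
      (Multiset.replicate (m * (m - 1) / 2) ((2 * (m : ℝ) / ((m : ℝ) - 1)) ^ (s / 2)))
      (pairMultiset (fun x y => ‖x - y‖ ^ s) p) := by
  intro k
  set N : ℕ := m * (m - 1) / 2 with hN
  set y : ℝ := (2 * (m : ℝ) / ((m : ℝ) - 1)) ^ (s / 2) with hy
  set T := Finset.univ.filter (fun q : Fin m × Fin m => q.1 < q.2) with hTdef
  have hm1 : (1:ℝ) ≤ (m:ℝ) - 1 := by
    have : (2:ℝ) ≤ (m:ℝ) := by exact_mod_cast hm
    linarith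
  have hNcast : ((N : ℕ) : ℝ) = (m:ℝ) * ((m:ℝ) - 1) / 2 := by
    have he : 2 ∣ m * (m - 1) := by
      rcases Nat.even_or_odd m with h | h
      · exact h.two_dvd.mul_right _
      · exact (Nat.Odd.sub_odd h odd_one).two_dvd.mul_left _
    rw [hN, Nat.cast_div he (by norm_num)]
    rw [Nat.cast_mul, Nat.cast_sub (le_trans one_le_two hm)]
    norm_num
  have hNR : (0:ℝ) < (N : ℝ) := by rw [hNcast]; nlinarith
  have hN0 : 0 < N := by exact_mod_cast hNR
  have hbase : (0:ℝ) ≤ 2 * (m:ℝ) / ((m:ℝ) - 1) := by positivity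
  have hy0 : 0 ≤ y := Real.rpow_nonneg hbase _
  -- LHS value
  have hA : kSmallestSum (Multiset.replicate N y) k = (min k N : ℕ) * y := by
    have hsort : (Multiset.replicate N y).sort (· ≤ ·) = List.replicate N y := by
      apply List.eq_replicate_iff.2
      constructor
      · rw [Multiset.length_sort, Multiset.card_replicate]
      · intro b hb
        have : b ∈ Multiset.replicate N y := (Multiset.mem_sort _).1 hb
        exact Multiset.eq_of_mem_replicate this
    rw [kSmallestSum, hsort, List.take_replicate, List.sum_replicate, nsmul_eq_mul]
  -- B facts
  set B := pairMultiset (fun x y => ‖x - y‖ ^ s) p with hB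
  set l := B.sort (· ≤ ·) with hl
  have hcardB : B.card = N := by
    rw [hB, pairMultiset, Multiset.card_map]
    exact card_pairs m
  have hlen : l.length = N := by rw [hl, Multiset.length_sort, hcardB]
  have hlsum : l.sum = B.sum := by
    have h := Multiset.sort_eq B (· ≤ ·)
    calc l.sum = ((l : Multiset ℝ)).sum := by simp
      _ = B.sum := by rw [hl, h]
  have hBsum : B.sum = ∑ q ∈ T, ‖p q.1 - p q.2‖ ^ s := by
    rw [hB, pairMultiset]
    rfl
  -- Jensen / concavity: total sum bound
  have key : B.sum ≤ (N : ℝ) * y := by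
    have hterm : ∀ q : Fin m × Fin m,
        ‖p q.1 - p q.2‖ ^ s = (‖p q.1 - p q.2‖ ^ 2) ^ (s / 2) := by
      intro q
      rw [← Real.rpow_natCast ‖p q.1 - p q.2‖ 2, ← Real.rpow_mul (norm_nonneg _)]
      congr 1
      ring
    have hconc : ConcaveOn ℝ (Set.Ici 0) fun x : ℝ => x ^ (s / 2) :=
      Real.concaveOn_rpow (by linarith) (by linarith)
    have hw1 : ∑ _q ∈ T, (1 / (N:ℝ)) = 1 := by
      rw [Finset.sum_const]
      have : T.card = N := card_pairs m
      rw [this, nsmul_eq_mul]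
      field_simp
    have hJ := hconc.le_map_sum (f := fun x : ℝ => x ^ (s / 2)) (t := T)
      (w := fun _ => 1 / (N:ℝ)) (p := fun q => ‖p q.1 - p q.2‖ ^ 2)
      (fun q _ => by positivity) hw1 (fun q _ => Set.mem_Ici.2 (by positivity))
    simp only [smul_eq_mul] at hJ
    have hmean : ∑ q ∈ T, (1 / (N:ℝ)) * ‖p q.1 - p q.2‖ ^ 2 ≤ 2 * (m:ℝ) / ((m:ℝ) - 1) := by
      rw [← Finset.mul_sum]
      have h1 := sum_sq_pairs p hp
      have : (1 / (N:ℝ)) * (∑ q ∈ T, ‖p q.1 - p q.2‖ ^ 2) ≤ (1 / (N:ℝ)) * (m:ℝ)^2 := by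
        apply mul_le_mul_of_nonneg_left h1 (by positivity)
      refine this.trans ?_
      rw [hNcast]
      have hm0 : (m:ℝ) ≠ 0 := by positivity
      have hm1' : (m:ℝ) - 1 ≠ 0 := by linarith
      have heq : 1 / ((m:ℝ) * ((m:ℝ) - 1) / 2) * (m:ℝ)^2 = 2 * (m:ℝ) / ((m:ℝ) - 1) := by
        field_simp
      rw [heq]
    have hrpow : (∑ q ∈ T, (1 / (N:ℝ)) * ‖p q.1 - p q.2‖ ^ 2) ^ (s / 2) ≤ y := by
      rw [hy]
      exact Real.rpow_le_rpow (by positivity) hmean (by linarith)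
    have hchain : ∑ q ∈ T, (1 / (N:ℝ)) * (‖p q.1 - p q.2‖ ^ 2) ^ (s / 2) ≤ y :=
      hJ.trans hrpow
    calc B.sum = ∑ q ∈ T, ‖p q.1 - p q.2‖ ^ s := hBsum
      _ = ∑ q ∈ T, (‖p q.1 - p q.2‖ ^ 2) ^ (s / 2) := by
          exact Finset.sum_congr rfl (fun q _ => hterm q)
      _ = (N:ℝ) * ∑ q ∈ T, (1 / (N:ℝ)) * (‖p q.1 - p q.2‖ ^ 2) ^ (s / 2) := by
          rw [← Finset.mul_sum, ← mul_assoc]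
          field_simp
      _ ≤ (N:ℝ) * y := by
          apply mul_le_mul_of_nonneg_left hchain (le_of_lt hNR)
  -- combine
  rw [hA]
  have htk : l.take k = l.take (min k N) := by
    rw [List.take_eq_take_iff]
    simp [hlen]
  have havg := sorted_avg l (Multiset.pairwise_sort _ _) (min k N)
    (by rw [hlen]; exact min_le_right _ _)
  rw [hlsum, hlen] at havg
  have hfinal : (N:ℝ) * (l.take (min k N)).sum ≤ (N:ℝ) * ((min k N : ℕ) * y) := by
    calc (N:ℝ) * (l.take (min k N)).sum ≤ (min k N : ℕ) * B.sum := havg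
      _ ≤ (min k N : ℕ) * ((N:ℝ) * y) := by
          apply mul_le_mul_of_nonneg_left key (Nat.cast_nonneg _)
      _ = (N:ℝ) * ((min k N : ℕ) * y) := by ring
  have := (mul_le_mul_iff_right₀ hNR).1 hfinal
  rw [kSmallestSum, ← hl, htk]
  exact this
end
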